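/- arXiv:2508.17301 — 4 statements merged into one kernel-verified Lean document; each statement's English description precedes it below -/
import Mathlib

section
/- Let A denote the closure in ℝ of the set {𝒜(p) : p ∈ K}. Then A is a nonempty closed interval and contains a unique element 𝒜* of minimal absolute value. As δ tends to 1/λ₁ from the left: 𝒜(p*(δ)) → 𝒜*, R_Π(p*(δ), δ) → 1 − (𝒜*)², and R_V(p*(δ), δ) → (1 − 𝒜*)². In particular, in the limit the equilibrium behaves as if the firm minimized the absolute average price deviation |𝒜(p)| over K. -/
open Matrix

noncomputable def Hmat {n : ℕ} (G : Matrix (Fin n) (Fin n) ℝ) (δ : ℝ) :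
    Matrix (Fin n) (Fin n) ℝ :=
  (1 - δ • G)⁻¹

/-- Monopolist profit Π(p) = (p − c)ᵀ H (a − p). -/
noncomputable def profit {n : ℕ} (G : Matrix (Fin n) (Fin n) ℝ) (δ : ℝ)
    (a c p : Fin n → ℝ) : ℝ :=
  (p - c) ⬝ᵥ (Hmat G δ *ᵥ (a - p))

/-- Aggregate consumer surplus V(p) = (1/2)(a − p)ᵀ H² (a − p). -/
noncomputable def surplus {n : ℕ} (G : Matrix (Fin n) (Fin n) ℝ) (δ : ℝ)
    (a p : Fin n → ℝ) : ℝ :=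
  (1 / 2 : ℝ) * ((a - p) ⬝ᵥ ((Hmat G δ * Hmat G δ) *ᵥ (a - p)))

/-- Unrestricted optimal price p^ur = (a + c)/2. -/
noncomputable def pUR {n : ℕ} (a c : Fin n → ℝ) : Fin n → ℝ :=
  (1 / 2 : ℝ) • (a + c)

/-- The Pareto price family 𝕡(η). -/
noncomputable def pFam {n : ℕ} (G : Matrix (Fin n) (Fin n) ℝ) (δ : ℝ)
    (a c : Fin n → ℝ) (η : ℝ) : Fin n → ℝ :=
  pUR a c - (η / (2 - η)) • ((1 - (2 * δ / (2 - η)) • G)⁻¹ *ᵥ ((1 / 2 : ℝ) • (a - c)))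

/-- The all-ones vector 𝟙. -/
def onesVec (n : ℕ) : Fin n → ℝ := fun _ => 1

/-- The sufficient statistic 𝒜(p) = ⟨w₁, p − p^ur⟩ / ⟨w₁, (a−c)/2⟩. -/
noncomputable def AAstat {n : ℕ} (w1 a c p : Fin n → ℝ) : ℝ :=
  (w1 ⬝ᵥ (p - pUR a c)) / (w1 ⬝ᵥ ((1 / 2 : ℝ) • (a - c)))

/-- Profit ratio R_Π(p, δ). -/
noncomputable def Rpi {n : ℕ} (G : Matrix (Fin n) (Fin n) ℝ) (δ : ℝ)
    (a c p : Fin n → ℝ) : ℝ :=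
  profit G δ a c p / profit G δ a c (pUR a c)

/-- Consumer-surplus ratio R_V(p, δ). -/
noncomputable def Rv {n : ℕ} (G : Matrix (Fin n) (Fin n) ℝ) (δ : ℝ)
    (a c p : Fin n → ℝ) : ℝ :=
  surplus G δ a p / surplus G δ a (pUR a c)


lemma orth_WWT {n : ℕ} (w : Fin n → Fin n → ℝ)
    (horth : ∀ i j, w i ⬝ᵥ w j = if i = j then (1:ℝ) else 0) :
    (Matrix.of w) * (Matrix.of w)ᵀ = 1 := by
  ext i j
  simpa [Matrix.mul_apply, Matrix.one_apply, dotProduct] using horth i j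

lemma spectral_decomp {n : ℕ} (w : Fin n → Fin n → ℝ)
    (horth : ∀ i j, w i ⬝ᵥ w j = if i = j then (1:ℝ) else 0)
    (S : Matrix (Fin n) (Fin n) ℝ) (μ : Fin n → ℝ)
    (hS : ∀ i, S *ᵥ w i = μ i • w i) :
    S = (Matrix.of w)ᵀ * Matrix.diagonal μ * Matrix.of w := by
  set W : Matrix (Fin n) (Fin n) ℝ := Matrix.of w with hW
  have hWWT : W * Wᵀ = 1 := orth_WWT w horth
  have hWTW : Wᵀ * W = 1 := by rw [mul_eq_one_comm] at hWWT; exact hWWT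
  have hSW : S * Wᵀ = Wᵀ * Matrix.diagonal μ := by
    ext j i
    have h1 : (S * Wᵀ) j i = (S *ᵥ w i) j := by
      simp [Matrix.mul_apply, Matrix.mulVec, dotProduct, hW]
    rw [h1, hS i]
    simp [Matrix.mul_apply, Matrix.diagonal, hW, mul_comm]
  calc S = S * (Wᵀ * W) := by rw [hWTW, Matrix.mul_one]
  _ = (S * Wᵀ) * W := by rw [Matrix.mul_assoc]
  _ = Wᵀ * Matrix.diagonal μ * W := by rw [hSW]

lemma quad_spectral {n : ℕ} (w : Fin n → Fin n → ℝ)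
    (horth : ∀ i j, w i ⬝ᵥ w j = if i = j then (1:ℝ) else 0)
    (S : Matrix (Fin n) (Fin n) ℝ) (μ : Fin n → ℝ)
    (hS : ∀ i, S *ᵥ w i = μ i • w i) (u v : Fin n → ℝ) :
    u ⬝ᵥ (S *ᵥ v) = ∑ i, μ i * ((w i ⬝ᵥ u) * (w i ⬝ᵥ v)) := by
  rw [spectral_decomp w horth S μ hS]
  rw [← Matrix.mulVec_mulVec, ← Matrix.mulVec_mulVec]
  rw [Matrix.dotProduct_mulVec, Matrix.vecMul_transpose]
  rw [dotProduct]
  refine Finset.sum_congr rfl fun i _ => ?_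
  rw [Matrix.mulVec_diagonal]
  have h1 : (Matrix.of w *ᵥ u) i = w i ⬝ᵥ u := rfl
  have h2 : (Matrix.of w *ᵥ v) i = w i ⬝ᵥ v := rfl
  rw [h1, h2]; ring

lemma spectral_inv_eig {n : ℕ} (w : Fin n → Fin n → ℝ)
    (horth : ∀ i j, w i ⬝ᵥ w j = if i = j then (1:ℝ) else 0)
    (S : Matrix (Fin n) (Fin n) ℝ) (μ : Fin n → ℝ)
    (hS : ∀ i, S *ᵥ w i = μ i • w i) (hd : ∀ i, μ i ≠ 0) :
    ∀ i, S⁻¹ *ᵥ w i = (μ i)⁻¹ • w i := by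
  set W : Matrix (Fin n) (Fin n) ℝ := Matrix.of w with hW
  have hWWT : W * Wᵀ = 1 := orth_WWT w horth
  have hWTW : Wᵀ * W = 1 := by rw [mul_eq_one_comm] at hWWT; exact hWWT
  set B : Matrix (Fin n) (Fin n) ℝ := Wᵀ * Matrix.diagonal (fun i => (μ i)⁻¹) * W with hB
  have hright : S * B = 1 := by
    rw [spectral_decomp w horth S μ hS, hB]
    simp only [Matrix.mul_assoc]
    rw [← Matrix.mul_assoc W Wᵀ, hWWT, Matrix.one_mul]
    rw [← Matrix.mul_assoc (Matrix.diagonal μ), Matrix.diagonal_mul_diagonal]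
    have hfun : (fun i => μ i * (μ i)⁻¹) = fun _ => (1:ℝ) :=
      funext fun i => mul_inv_cancel₀ (hd i)
    rw [hfun, Matrix.diagonal_one, Matrix.one_mul, hWTW]
  have hinv : S⁻¹ = B := Matrix.inv_eq_right_inv hright
  intro i
  rw [hinv, hB]
  have hWv : W *ᵥ w i = Pi.single i 1 := by
    ext k
    have h : (W *ᵥ w i) k = w k ⬝ᵥ w i := rfl
    rw [h, horth k i, Pi.single_apply]
  rw [← Matrix.mulVec_mulVec, ← Matrix.mulVec_mulVec, hWv]
  ext j
  have hterm : ∀ x, w x j * Matrix.diagonal (fun k => (μ k)⁻¹) x i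
      = if x = i then (μ i)⁻¹ * w i j else 0 := by
    intro x
    by_cases h : x = i <;> simp [Matrix.diagonal_apply, h, mul_comm]
  have hlhs : ((Wᵀ : Matrix (Fin n) (Fin n) ℝ) *ᵥ (Matrix.diagonal (fun k => (μ k)⁻¹) *ᵥ Pi.single i 1)) j
      = ∑ x, w x j * Matrix.diagonal (fun k => (μ k)⁻¹) x i := by
    simp [Matrix.mulVec, dotProduct, Matrix.mulVec_diagonal, Pi.single_apply, mul_ite, hW,
      Matrix.diagonal_apply, mul_comm]
  rw [hlhs, Finset.sum_congr rfl (fun x _ => hterm x), Finset.sum_ite_eq']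
  simp

lemma Hmat_eig {n : ℕ} (G : Matrix (Fin n) (Fin n) ℝ)
    (w : Fin n → Fin n → ℝ) (lam : Fin n → ℝ)
    (horth : ∀ i j, w i ⬝ᵥ w j = if i = j then (1:ℝ) else 0)
    (heig : ∀ i, G *ᵥ w i = lam i • w i)
    (δ : ℝ) (hd : ∀ i, 1 - δ * lam i ≠ 0) :
    ∀ i, Hmat G δ *ᵥ w i = (1 - δ * lam i)⁻¹ • w i := by
  have hS : ∀ i, (1 - δ • G) *ᵥ w i = (1 - δ * lam i) • w i := by
    intro i
    rw [Matrix.sub_mulVec, Matrix.one_mulVec, Matrix.smul_mulVec, heig i,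
      smul_smul, sub_smul, one_smul]
  exact spectral_inv_eig w horth _ _ hS hd

lemma Hmat2_eig {n : ℕ} (G : Matrix (Fin n) (Fin n) ℝ)
    (w : Fin n → Fin n → ℝ) (lam : Fin n → ℝ)
    (horth : ∀ i j, w i ⬝ᵥ w j = if i = j then (1:ℝ) else 0)
    (heig : ∀ i, G *ᵥ w i = lam i • w i)
    (δ : ℝ) (hd : ∀ i, 1 - δ * lam i ≠ 0) :
    ∀ i, (Hmat G δ * Hmat G δ) *ᵥ w i = ((1 - δ * lam i)⁻¹)^2 • w i := by
  intro i
  rw [← Matrix.mulVec_mulVec, Hmat_eig G w lam horth heig δ hd i,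
    Matrix.mulVec_smul, Hmat_eig G w lam horth heig δ hd i, smul_smul, sq]

lemma profit_formula {n : ℕ} (G : Matrix (Fin n) (Fin n) ℝ)
    (w : Fin n → Fin n → ℝ) (lam : Fin n → ℝ)
    (horth : ∀ i j, w i ⬝ᵥ w j = if i = j then (1:ℝ) else 0)
    (heig : ∀ i, G *ᵥ w i = lam i • w i)
    (δ : ℝ) (hd : ∀ i, 1 - δ * lam i ≠ 0) (a c p : Fin n → ℝ) :
    profit G δ a c p = ∑ i, (1 - δ * lam i)⁻¹ *
      ((w i ⬝ᵥ ((1/2 : ℝ) • (a - c)))^2 - (w i ⬝ᵥ (p - pUR a c))^2) := by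
  obtain ⟨b, hb⟩ : ∃ b : Fin n → ℝ, b = (1/2 : ℝ) • (a - c) := ⟨_, rfl⟩
  obtain ⟨x, hx⟩ : ∃ x : Fin n → ℝ, x = p - pUR a c := ⟨_, rfl⟩
  rw [← hb, ← hx]
  have h1 : p - c = b + x := by
    funext k; simp [hb, hx, pUR]; ring
  have h2 : a - p = b - x := by
    funext k; simp [hb, hx, pUR]; ring
  rw [profit, h1, h2, quad_spectral w horth _ _ (Hmat_eig G w lam horth heig δ hd)]
  refine Finset.sum_congr rfl fun i _ => ?_
  rw [dotProduct_add, dotProduct_sub]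
  ring

lemma surplus_formula {n : ℕ} (G : Matrix (Fin n) (Fin n) ℝ)
    (w : Fin n → Fin n → ℝ) (lam : Fin n → ℝ)
    (horth : ∀ i j, w i ⬝ᵥ w j = if i = j then (1:ℝ) else 0)
    (heig : ∀ i, G *ᵥ w i = lam i • w i)
    (δ : ℝ) (hd : ∀ i, 1 - δ * lam i ≠ 0) (a c p : Fin n → ℝ) :
    surplus G δ a p = (1/2 : ℝ) * ∑ i, ((1 - δ * lam i)⁻¹)^2 *
      ((w i ⬝ᵥ ((1/2 : ℝ) • (a - c))) - (w i ⬝ᵥ (p - pUR a c)))^2 := by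
  obtain ⟨b, hb⟩ : ∃ b : Fin n → ℝ, b = (1/2 : ℝ) • (a - c) := ⟨_, rfl⟩
  obtain ⟨x, hx⟩ : ∃ x : Fin n → ℝ, x = p - pUR a c := ⟨_, rfl⟩
  rw [← hb, ← hx]
  have h2 : a - p = b - x := by
    funext k; simp [hb, hx, pUR]; ring
  rw [surplus, h2, quad_spectral w horth _ _ (Hmat2_eig G w lam horth heig δ hd)]
  congr 1
  refine Finset.sum_congr rfl fun i _ => ?_
  rw [dotProduct_sub]
  ring

set_option maxHeartbeats 2000000 in
theorem stmt9 {n : ℕ} [NeZero n]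
    (G : Matrix (Fin n) (Fin n) ℝ) (hGsym : G.IsSymm)
    (hGnn : ∀ i j, 0 ≤ G i j) (hGdiag : ∀ i, G i i = 0)
    (w : Fin n → Fin n → ℝ) (lam : Fin n → ℝ)
    (horth : ∀ i j, w i ⬝ᵥ w j = if i = j then (1 : ℝ) else 0)
    (heig : ∀ i, G *ᵥ w i = lam i • w i)
    (hgap : ∀ i, i ≠ 0 → lam i < lam 0)
    (hlam0 : 0 < lam 0)
    (hw0 : ∀ k, 0 < w 0 k)
    (hpd : ∀ δ ∈ Set.Ico (0 : ℝ) (1 / lam 0), (Hmat G δ).PosDef)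
    (a c : Fin n → ℝ) (hac : ∀ i, c i < a i)
    (K : Set (Fin n → ℝ)) (hKne : K.Nonempty) (hKcl : IsClosed K) (hKconv : Convex ℝ K)
    (pstar : ℝ → Fin n → ℝ)
    (hps : ∀ δ ∈ Set.Ico (0 : ℝ) (1 / lam 0),
      pstar δ ∈ K ∧ ∀ q ∈ K, profit G δ a c q ≤ profit G δ a c (pstar δ)) :
    (closure ((fun p => AAstat (w 0) a c p) '' K)).Nonempty ∧
    IsClosed (closure ((fun p => AAstat (w 0) a c p) '' K)) ∧
    (closure ((fun p => AAstat (w 0) a c p) '' K)).OrdConnected ∧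
    ∃ astar ∈ closure ((fun p => AAstat (w 0) a c p) '' K),
      (∀ z ∈ closure ((fun p => AAstat (w 0) a c p) '' K), |astar| ≤ |z|) ∧
      (∀ z ∈ closure ((fun p => AAstat (w 0) a c p) '' K),
        (∀ y ∈ closure ((fun p => AAstat (w 0) a c p) '' K), |z| ≤ |y|) → z = astar) ∧
      Filter.Tendsto (fun δ : ℝ => AAstat (w 0) a c (pstar δ))
        (nhdsWithin (1 / lam 0) (Set.Ico 0 (1 / lam 0))) (nhds astar) ∧
      Filter.Tendsto (fun δ : ℝ => Rpi G δ a c (pstar δ))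
        (nhdsWithin (1 / lam 0) (Set.Ico 0 (1 / lam 0))) (nhds (1 - astar ^ 2)) ∧
      Filter.Tendsto (fun δ : ℝ => Rv G δ a c (pstar δ))
        (nhdsWithin (1 / lam 0) (Set.Ico 0 (1 / lam 0))) (nhds ((1 - astar) ^ 2)) := by
  classical
  have hl1 : (0:ℝ) < lam 0 := hlam0
  set b : Fin n → ℝ := (1/2 : ℝ) • (a - c) with hb
  set β : Fin n → ℝ := fun i => w i ⬝ᵥ b with hβ
  set ξ : (Fin n → ℝ) → Fin n → ℝ := fun p i => w i ⬝ᵥ (p - pUR a c) with hξ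
  have hβ0 : 0 < β 0 := by
    rw [hβ]
    dsimp only
    rw [dotProduct]
    apply Finset.sum_pos _ Finset.univ_nonempty
    intro k _
    have hbk : 0 < b k := by
      rw [hb]
      have := hac k
      simp only [Pi.smul_apply, Pi.sub_apply, smul_eq_mul]
      linarith
    exact mul_pos (hw0 k) hbk
  have hAA : ∀ p, AAstat (w 0) a c p = ξ p 0 / β 0 := fun p => rfl
  set I : Set ℝ := Set.Ico (0:ℝ) (1 / lam 0) with hI
  set μ : ℝ → Fin n → ℝ := fun δ i => (1 - δ * lam i)⁻¹ with hμ
  set t : ℝ → ℝ := fun δ => 1 - δ * lam 0 with ht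
  have hlamle : ∀ i, lam i ≤ lam 0 := by
    intro i
    by_cases h : i = 0
    · rw [h]
    · exact (hgap i h).le
  have htpos : ∀ δ ∈ I, 0 < t δ := by
    intro δ hδ
    have h1 : δ * lam 0 < 1 := by
      calc δ * lam 0 < (1/lam 0) * lam 0 := mul_lt_mul_of_pos_right hδ.2 hl1
      _ = 1 := by field_simp
    simp only [ht]
    linarith
  have htle1 : ∀ δ ∈ I, t δ ≤ 1 := by
    intro δ hδ
    have h0 : 0 ≤ δ * lam 0 := mul_nonneg hδ.1 hl1.le
    simp only [ht]
    linarith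
  have hdpos : ∀ δ ∈ I, ∀ i, 0 < 1 - δ * lam i := by
    intro δ hδ i
    have h1 : δ * lam i ≤ δ * lam 0 := mul_le_mul_of_nonneg_left (hlamle i) hδ.1
    have h2 := htpos δ hδ
    simp only [ht] at h2
    linarith
  have hdne : ∀ δ ∈ I, ∀ i, 1 - δ * lam i ≠ 0 := fun δ hδ i => (hdpos δ hδ i).ne'
  have hμpos : ∀ δ ∈ I, ∀ i, 0 < μ δ i := by
    intro δ hδ i
    simp only [hμ]
    exact inv_pos.mpr (hdpos δ hδ i)
  have hμ0 : ∀ δ, μ δ 0 = (t δ)⁻¹ := fun δ => rfl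
  have hμt : ∀ δ ∈ I, ∀ i, μ δ i ≤ (t δ)⁻¹ := by
    intro δ hδ i
    have h1 : t δ ≤ 1 - δ * lam i := by
      have : δ * lam i ≤ δ * lam 0 := mul_le_mul_of_nonneg_left (hlamle i) hδ.1
      simp only [ht]
      linarith
    exact inv_anti₀ (htpos δ hδ) h1
  set M : ℝ := ∑ i, max 1 (lam 0 / (lam 0 - lam i)) with hM
  have hMterm : ∀ i, (0:ℝ) ≤ max 1 (lam 0 / (lam 0 - lam i)) :=
    fun i => le_trans zero_le_one (le_max_left _ _)
  have hMpos : 0 < M := by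
    rw [hM]
    apply Finset.sum_pos _ Finset.univ_nonempty
    intro i _
    exact lt_of_lt_of_le zero_lt_one (le_max_left _ _)
  have hμM : ∀ δ ∈ I, ∀ i, i ≠ 0 → μ δ i ≤ M := by
    intro δ hδ i hi
    have hterm : μ δ i ≤ max 1 (lam 0 / (lam 0 - lam i)) := by
      rcases le_or_gt (lam i) 0 with h | h
      · have h1 : 1 ≤ 1 - δ * lam i := by nlinarith [hδ.1]
        have h2 : μ δ i ≤ 1 := by
          simp only [hμ]
          exact inv_le_one_of_one_le₀ h1
        exact h2.trans (le_max_left _ _)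
      · have hgapi := hgap i hi
        have hposgap : 0 < (lam 0 - lam i) / lam 0 := div_pos (by linarith) hl1
        have h1 : (lam 0 - lam i) / lam 0 ≤ 1 - δ * lam i := by
          have h2 : δ * lam i ≤ (1/lam 0) * lam i := mul_le_mul_of_nonneg_right hδ.2.le h.le
          have h3 : (1/lam 0) * lam i = lam i / lam 0 := by ring
          have h4 : (lam 0 - lam i)/lam 0 = 1 - lam i / lam 0 := by field_simp
          rw [h4]
          linarith [h2.trans_eq h3]
        have h5 : μ δ i ≤ ((lam 0 - lam i) / lam 0)⁻¹ := inv_anti₀ hposgap h1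
        have h6 : ((lam 0 - lam i) / lam 0)⁻¹ = lam 0 / (lam 0 - lam i) := by
          rw [inv_div]
        exact (h5.trans_eq h6).trans (le_max_right _ _)
    exact hterm.trans (Finset.single_le_sum (fun j _ => hMterm j) (Finset.mem_univ i))
  set m : ℝ := (1 + (∑ i, |lam i|) / lam 0)⁻¹ with hm
  have hmpos : 0 < m := by
    rw [hm]
    have : 0 ≤ (∑ i, |lam i|) / lam 0 := by positivity
    exact inv_pos.mpr (by linarith)
  have hμm : ∀ δ ∈ I, ∀ i, m ≤ μ δ i := by
    intro δ hδ i
    have hub : 1 - δ * lam i ≤ 1 + (∑ j, |lam j|) / lam 0 := by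
      have h1 : -(δ * lam i) ≤ |lam i| / lam 0 := by
        rcases le_or_gt 0 (lam i) with h | h
        · have h2 : 0 ≤ δ * lam i := mul_nonneg hδ.1 h
          have h3 : (0:ℝ) ≤ |lam i| / lam 0 := by positivity
          linarith
        · have h2 : -(δ * lam i) = δ * |lam i| := by rw [abs_of_neg h]; ring
          rw [h2]
          calc δ * |lam i| ≤ (1/lam 0) * |lam i| :=
                mul_le_mul_of_nonneg_right hδ.2.le (abs_nonneg _)
          _ = |lam i| / lam 0 := by ring
      have h2 : |lam i| ≤ ∑ j, |lam j| :=
        Finset.single_le_sum (f := fun j => |lam j|) (fun j _ => abs_nonneg _) (Finset.mem_univ i)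
      have h3 : |lam i| / lam 0 ≤ (∑ j, |lam j|) / lam 0 :=
        (div_le_div_iff_of_pos_right hl1).mpr h2
      linarith
    have := inv_anti₀ (hdpos δ hδ i) hub
    simp only [hμ, hm]
    exact this
  set Qb : ℝ := ∑ i ∈ Finset.univ.erase 0, (β i)^2 with hQb
  set Sx : (Fin n → ℝ) → ℝ := fun p => ∑ i, (ξ p i)^2 with hSx
  set Qxf : (Fin n → ℝ) → ℝ := fun p => ∑ i ∈ Finset.univ.erase 0, (ξ p i)^2 with hQxf
  have hsplit : ∀ f : Fin n → ℝ, ∑ i, f i = f 0 + ∑ i ∈ Finset.univ.erase 0, f i :=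
    fun f => (Finset.add_sum_erase _ f (Finset.mem_univ 0)).symm
  have hSumlo : ∀ δ ∈ I, ∀ v : Fin n → ℝ, (v 0)^2 * (t δ)⁻¹ ≤ ∑ i, μ δ i * (v i)^2 := by
    intro δ hδ v
    rw [hsplit (fun i => μ δ i * (v i)^2)]
    have h1 : μ δ 0 * (v 0)^2 = (v 0)^2 * (t δ)⁻¹ := by rw [hμ0]; ring
    have h2 : 0 ≤ ∑ i ∈ Finset.univ.erase 0, μ δ i * (v i)^2 :=
      Finset.sum_nonneg fun i _ => mul_nonneg (hμpos δ hδ i).le (sq_nonneg _)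
    linarith
  have hSumhi : ∀ δ ∈ I, ∀ v : Fin n → ℝ,
      ∑ i, μ δ i * (v i)^2 ≤ (v 0)^2 * (t δ)⁻¹ + M * ∑ i ∈ Finset.univ.erase 0, (v i)^2 := by
    intro δ hδ v
    rw [hsplit (fun i => μ δ i * (v i)^2)]
    have h1 : μ δ 0 * (v 0)^2 = (v 0)^2 * (t δ)⁻¹ := by rw [hμ0]; ring
    have h2 : ∑ i ∈ Finset.univ.erase 0, μ δ i * (v i)^2
        ≤ M * ∑ i ∈ Finset.univ.erase 0, (v i)^2 := by
      rw [Finset.mul_sum]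
      apply Finset.sum_le_sum
      intro i hi
      exact mul_le_mul_of_nonneg_right (hμM δ hδ i (Finset.ne_of_mem_erase hi)) (sq_nonneg _)
    linarith
  have hSumt : ∀ δ ∈ I, ∀ v : Fin n → ℝ,
      ∑ i, μ δ i * (v i)^2 ≤ (∑ i, (v i)^2) * (t δ)⁻¹ := by
    intro δ hδ v
    rw [Finset.sum_mul]
    apply Finset.sum_le_sum
    intro i _
    rw [mul_comm ((v i)^2)]
    exact mul_le_mul_of_nonneg_right (hμt δ hδ i) (sq_nonneg _)
  have hSumm : ∀ δ ∈ I, ∀ v : Fin n → ℝ,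
      m * ∑ i, (v i)^2 ≤ ∑ i, μ δ i * (v i)^2 := by
    intro δ hδ v
    rw [Finset.mul_sum]
    apply Finset.sum_le_sum
    intro i _
    exact mul_le_mul_of_nonneg_right (hμm δ hδ i) (sq_nonneg _)
  have hSum2lo : ∀ δ ∈ I, ∀ v : Fin n → ℝ,
      (v 0)^2 * ((t δ)⁻¹)^2 ≤ ∑ i, (μ δ i)^2 * (v i)^2 := by
    intro δ hδ v
    rw [hsplit (fun i => (μ δ i)^2 * (v i)^2)]
    have h1 : (μ δ 0)^2 * (v 0)^2 = (v 0)^2 * ((t δ)⁻¹)^2 := by rw [hμ0]; ring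
    have h2 : 0 ≤ ∑ i ∈ Finset.univ.erase 0, (μ δ i)^2 * (v i)^2 :=
      Finset.sum_nonneg fun i _ => mul_nonneg (sq_nonneg _) (sq_nonneg _)
    linarith
  have hSum2hi : ∀ δ ∈ I, ∀ v : Fin n → ℝ,
      ∑ i, (μ δ i)^2 * (v i)^2
        ≤ (v 0)^2 * ((t δ)⁻¹)^2 + M^2 * ∑ i ∈ Finset.univ.erase 0, (v i)^2 := by
    intro δ hδ v
    rw [hsplit (fun i => (μ δ i)^2 * (v i)^2)]
    have h1 : (μ δ 0)^2 * (v 0)^2 = (v 0)^2 * ((t δ)⁻¹)^2 := by rw [hμ0]; ring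
    have h2 : ∑ i ∈ Finset.univ.erase 0, (μ δ i)^2 * (v i)^2
        ≤ M^2 * ∑ i ∈ Finset.univ.erase 0, (v i)^2 := by
      rw [Finset.mul_sum]
      apply Finset.sum_le_sum
      intro i hi
      have hle := hμM δ hδ i (Finset.ne_of_mem_erase hi)
      have hμnn := (hμpos δ hδ i).le
      have hsq : (μ δ i)^2 ≤ M^2 := by nlinarith
      exact mul_le_mul_of_nonneg_right hsq (sq_nonneg _)
    linarith
  have hξUR : ∀ i, ξ (pUR a c) i = 0 := by
    intro i
    simp only [hξ]
    rw [sub_self, dotProduct_zero]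
  have hprofit : ∀ δ ∈ I, ∀ p, profit G δ a c p = ∑ i, μ δ i * ((β i)^2 - (ξ p i)^2) :=
    fun δ hδ p => profit_formula G w lam horth heig δ (hdne δ hδ) a c p
  have hsurplus : ∀ δ ∈ I, ∀ p, surplus G δ a p
      = (1/2 : ℝ) * ∑ i, (μ δ i)^2 * (β i - ξ p i)^2 :=
    fun δ hδ p => surplus_formula G w lam horth heig δ (hdne δ hδ) a c p
  set D : ℝ → ℝ := fun δ => ∑ i, μ δ i * (β i)^2 with hD
  set N : ℝ → ℝ := fun δ => ∑ i, μ δ i * (ξ (pstar δ) i)^2 with hNdef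
  set Den : ℝ → ℝ := fun δ => ∑ i, (μ δ i)^2 * (β i)^2 with hDendef
  set Num : ℝ → ℝ := fun δ => ∑ i, (μ δ i)^2 * (β i - ξ (pstar δ) i)^2 with hNumdef
  have hexpand : ∀ δ ∈ I, ∀ p, profit G δ a c p = D δ - ∑ i, μ δ i * (ξ p i)^2 := by
    intro δ hδ p
    rw [hprofit δ hδ p]
    simp only [hD]
    rw [← Finset.sum_sub_distrib]
    exact Finset.sum_congr rfl fun i _ => by ring
  have hprofitUR : ∀ δ ∈ I, profit G δ a c (pUR a c) = D δ := by
    intro δ hδ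
    rw [hexpand δ hδ]
    simp [hξUR]
  have hDpos : ∀ δ ∈ I, 0 < D δ := by
    intro δ hδ
    have h1 : 0 < (β 0)^2 * (t δ)⁻¹ :=
      mul_pos (pow_pos hβ0 2) (inv_pos.mpr (htpos δ hδ))
    exact lt_of_lt_of_le h1 (hSumlo δ hδ β)
  have hDenpos : ∀ δ ∈ I, 0 < Den δ := by
    intro δ hδ
    have h1 : 0 < (β 0)^2 * ((t δ)⁻¹)^2 :=
      mul_pos (pow_pos hβ0 2) (pow_pos (inv_pos.mpr (htpos δ hδ)) 2)
    exact lt_of_lt_of_le h1 (hSum2lo δ hδ β)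
  have hNopt : ∀ δ ∈ I, ∀ q ∈ K, N δ ≤ ∑ i, μ δ i * (ξ q i)^2 := by
    intro δ hδ q hq
    have h := (hps δ hδ).2 q hq
    rw [hexpand δ hδ q, hexpand δ hδ (pstar δ)] at h
    have hNis : N δ = ∑ i, μ δ i * (ξ (pstar δ) i)^2 := rfl
    linarith [hNis]
  have hNnonneg : ∀ δ ∈ I, 0 ≤ N δ := by
    intro δ hδ
    exact Finset.sum_nonneg fun i _ => mul_nonneg (hμpos δ hδ i).le (sq_nonneg _)
  have hRpi_eq : ∀ δ ∈ I, Rpi G δ a c (pstar δ) = 1 - N δ / D δ := by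
    intro δ hδ
    rw [Rpi, hprofitUR δ hδ, hexpand δ hδ (pstar δ)]
    have hNis : (∑ i, μ δ i * (ξ (pstar δ) i)^2) = N δ := rfl
    rw [hNis, sub_div, div_self (hDpos δ hδ).ne']
  have hRv_eq : ∀ δ ∈ I, Rv G δ a c (pstar δ) = Num δ / Den δ := by
    intro δ hδ
    rw [Rv, hsurplus δ hδ (pstar δ), hsurplus δ hδ (pUR a c)]
    have h1 : ∀ i, β i - ξ (pUR a c) i = β i := fun i => by rw [hξUR i, sub_zero]
    simp only [h1]
    rw [mul_div_mul_left _ _ (by norm_num : (1/2:ℝ) ≠ 0)]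
  set A : Set ℝ := (fun p => AAstat (w 0) a c p) '' K with hA
  have hAconv : Convex ℝ A := by
    rw [hA]
    rintro x ⟨p, hp, hpx⟩ y ⟨q, hq, hqy⟩ u v hu hv huv
    refine ⟨u • p + v • q, hKconv hp hq hu hv huv, ?_⟩
    have hpx' : AAstat (w 0) a c p = x := hpx
    have hqy' : AAstat (w 0) a c q = y := hqy
    show AAstat (w 0) a c (u • p + v • q) = u • x + v • y
    rw [hAA, ← hpx', ← hqy', hAA, hAA]
    have hcomb : ξ (u • p + v • q) 0 = u * ξ p 0 + v * ξ q 0 := by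
      simp only [hξ]
      have hvec : u • p + v • q - pUR a c = u • (p - pUR a c) + v • (q - pUR a c) := by
        funext k
        simp only [Pi.add_apply, Pi.sub_apply, Pi.smul_apply, smul_eq_mul]
        linear_combination (pUR a c k) * huv
      rw [hvec]
      simp [dotProduct_add, dotProduct_smul, smul_eq_mul]
    rw [hcomb, add_div, smul_eq_mul, smul_eq_mul]
    ring
  have hAbar_ne : (closure A).Nonempty := by
    obtain ⟨p0, hp0⟩ := hKne
    exact ⟨_, subset_closure ⟨p0, hp0, rfl⟩⟩
  have hconvbar : Convex ℝ (closure A) := hAconv.closure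
  have hOrd : (closure A).OrdConnected := hconvbar.ordConnected
  obtain ⟨z0, hz0⟩ := hAbar_ne
  have hcmpt : IsCompact (closure A ∩ Set.Icc (-|z0|) (|z0|)) :=
    isCompact_Icc.inter_left isClosed_closure
  have hz0mem : z0 ∈ closure A ∩ Set.Icc (-|z0|) (|z0|) :=
    ⟨hz0, neg_abs_le z0, le_abs_self z0⟩
  obtain ⟨astar, hastar_mem, hmin⟩ :=
    hcmpt.exists_isMinOn ⟨z0, hz0mem⟩ continuous_abs.continuousOn
  have hastar : astar ∈ closure A := hastar_mem.1
  have habs_min : ∀ z ∈ closure A, |astar| ≤ |z| := by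
    intro z hz
    rcases le_or_gt (|z|) (|z0|) with h | h
    · exact hmin ⟨hz, (abs_le.mp h).1, (abs_le.mp h).2⟩
    · exact (hmin hz0mem).trans h.le
  have huniq : ∀ z ∈ closure A, (∀ y ∈ closure A, |z| ≤ |y|) → z = astar := by
    intro z hz hzmin
    have h1 : |z| = |astar| := le_antisymm (hzmin astar hastar) (habs_min z hz)
    rcases abs_eq_abs.mp h1 with h | h
    · exact h
    · by_cases h0 : astar = 0
      · rw [h0] at h ⊢
        simpa using h
      · exfalso
        have hmid0 : (1/2 : ℝ) • z + (1/2 : ℝ) • astar = 0 := by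
          rw [h, smul_eq_mul, smul_eq_mul]; ring
        have hmid : (0:ℝ) ∈ closure A := by
          have := hconvbar hz hastar (by norm_num : (0:ℝ) ≤ 1/2)
            (by norm_num : (0:ℝ) ≤ 1/2) (by norm_num)
          rwa [hmid0] at this
        have hle := habs_min 0 hmid
        simp only [abs_zero] at hle
        exact h0 (abs_eq_zero.mp (le_antisymm hle (abs_nonneg _)))
  have hside : ∀ z ∈ closure A, (0 < astar → astar ≤ z) ∧ (astar < 0 → z ≤ astar) := by
    intro z hz
    constructor
    · intro hpos
      by_contra hlt
      push_neg at hlt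
      rcases le_or_gt 0 z with h | h
      · have hh := habs_min z hz
        rw [abs_of_nonneg h, abs_of_pos hpos] at hh
        linarith
      · have h0 : (0:ℝ) ∈ Set.Icc z astar := ⟨h.le, hpos.le⟩
        have hh := habs_min 0 (hOrd.out hz hastar h0)
        rw [abs_zero, abs_of_pos hpos] at hh
        linarith
    · intro hneg
      by_contra hlt
      push_neg at hlt
      rcases le_or_gt z 0 with h | h
      · have hh := habs_min z hz
        rw [abs_of_nonpos h, abs_of_neg hneg] at hh
        linarith
      · have h0 : (0:ℝ) ∈ Set.Icc astar z := ⟨hneg.le, h.le⟩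
        have hh := habs_min 0 (hOrd.out hastar hz h0)
        rw [abs_zero, abs_of_neg hneg] at hh
        linarith
  have habs_close : ∀ ε > (0:ℝ), ∀ z ∈ closure A, z^2 < (|astar| + ε)^2 → |z - astar| < ε := by
    intro ε hε z hz hsq
    have h2 : |z| < |astar| + ε := by
      by_contra hcon
      push_neg at hcon
      have h3 : (|astar| + ε)^2 ≤ |z|^2 := pow_le_pow_left₀ (by positivity) hcon 2
      rw [sq_abs] at h3
      linarith
    rcases lt_trichotomy astar 0 with h | h | h
    · have h1 : z ≤ astar := (hside z hz).2 h
      rw [abs_of_neg h] at h2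
      rw [abs_of_nonpos (by linarith : z - astar ≤ 0)]
      have h4 : |z| = -z := abs_of_neg (lt_of_le_of_lt h1 h)
      linarith
    · rw [h, sub_zero]
      rw [h, abs_zero, zero_add] at h2
      exact h2
    · have h1 : astar ≤ z := (hside z hz).1 h
      rw [abs_of_pos h] at h2
      rw [abs_of_nonneg (by linarith : (0:ℝ) ≤ z - astar)]
      have h4 : |z| = z := abs_of_nonneg (le_trans h.le h1)
      linarith
  obtain ⟨q0, hq0⟩ := id hKne
  set L := nhdsWithin (1 / lam 0) I with hLdef
  have hmemI : ∀ᶠ δ in L, δ ∈ I := eventually_mem_nhdsWithin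
  have htt0 : Filter.Tendsto t L (nhds 0) := by
    have hc : Continuous t := by
      rw [ht]; exact continuous_const.sub (continuous_id.mul continuous_const)
    have h1 := hc.tendsto (1 / lam 0)
    have hval : t (1 / lam 0) = 0 := by
      simp only [ht]; field_simp; ring
    rw [hval] at h1
    exact h1.mono_left nhdsWithin_le_nhds
  have htsmall : ∀ η > (0:ℝ), ∀ᶠ δ in L, t δ < η := by
    intro η hη
    exact htt0.eventually (gt_mem_nhds hη)
  have hQxf_nn : ∀ p, 0 ≤ Qxf p := fun p => Finset.sum_nonneg fun i _ => sq_nonneg _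
  have hQb_nn : 0 ≤ Qb := Finset.sum_nonneg fun i _ => sq_nonneg _
  have hSx_nn : ∀ p, 0 ≤ Sx p := fun p => Finset.sum_nonneg fun i _ => sq_nonneg _
  set sfun : ℝ → ℝ := fun δ => ξ (pstar δ) 0 / β 0 with hsfun
  have hξs : ∀ δ, ξ (pstar δ) 0 = sfun δ * β 0 := by
    intro δ
    exact (div_mul_cancel₀ _ hβ0.ne').symm
  have hsA : ∀ δ ∈ I, sfun δ ∈ closure A := by
    intro δ hδ
    exact subset_closure ⟨pstar δ, (hps δ hδ).1, hAA (pstar δ)⟩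
  have hstend : Filter.Tendsto sfun L (nhds astar) := by
    rw [Metric.tendsto_nhds]
    intro ε hε
    have hopen : IsOpen {y : ℝ | y^2 < (|astar| + ε)^2} :=
      isOpen_lt (continuous_pow 2) continuous_const
    have hmem : astar ∈ {y : ℝ | y^2 < (|astar| + ε)^2} := by
      show astar^2 < (|astar| + ε)^2
      nlinarith [sq_abs astar, abs_nonneg astar]
    obtain ⟨yq, hyU, hyA⟩ := mem_closure_iff.mp hastar _ hopen hmem
    obtain ⟨q, hqK, hqy⟩ := hyA
    have hyq : yq = ξ q 0 / β 0 := by rw [← hqy]; exact hAA q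
    have hξq : ξ q 0 = yq * β 0 := by rw [hyq]; exact (div_mul_cancel₀ _ hβ0.ne').symm
    have hysq : yq^2 < (|astar| + ε)^2 := hyU
    have hκ : 0 < ((|astar| + ε)^2 - yq^2) * (β 0)^2 / (M * Qxf q + 1) := by
      apply div_pos
      · exact mul_pos (by linarith) (pow_pos hβ0 2)
      · have := mul_nonneg hMpos.le (hQxf_nn q)
        linarith
    filter_upwards [hmemI, htsmall _ hκ] with δ hδ htδ
    have ht1 : 0 < t δ := htpos δ hδ
    have h1 : (ξ (pstar δ) 0)^2 * (t δ)⁻¹ ≤ N δ := hSumlo δ hδ (ξ (pstar δ))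
    have h2 : N δ ≤ (ξ q 0)^2 * (t δ)⁻¹ + M * Qxf q :=
      (hNopt δ hδ q hqK).trans (hSumhi δ hδ (ξ q))
    have e0 : (t δ)⁻¹ * t δ = 1 := inv_mul_cancel₀ ht1.ne'
    have h3 : (ξ (pstar δ) 0)^2 ≤ (ξ q 0)^2 + t δ * (M * Qxf q) := by
      have h4 := h1.trans h2
      calc (ξ (pstar δ) 0)^2 = (ξ (pstar δ) 0)^2 * ((t δ)⁻¹ * t δ) := by rw [e0, mul_one]
      _ = (ξ (pstar δ) 0)^2 * (t δ)⁻¹ * t δ := by ring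
      _ ≤ ((ξ q 0)^2 * (t δ)⁻¹ + M * Qxf q) * t δ := mul_le_mul_of_nonneg_right h4 ht1.le
      _ = (ξ q 0)^2 * ((t δ)⁻¹ * t δ) + t δ * (M * Qxf q) := by ring
      _ = (ξ q 0)^2 + t δ * (M * Qxf q) := by rw [e0, mul_one]
    have hMQ : 0 ≤ M * Qxf q := mul_nonneg hMpos.le (hQxf_nn q)
    have h5 : t δ * (M * Qxf q) < ((|astar| + ε)^2 - yq^2) * (β 0)^2 := by
      have hpos1 : 0 < M * Qxf q + 1 := by linarith
      have h6 : t δ * (M * Qxf q + 1) < ((|astar| + ε)^2 - yq^2) * (β 0)^2 :=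
        (lt_div_iff₀ hpos1).mp htδ
      have h7 : t δ * (M * Qxf q + 1) = t δ * (M * Qxf q) + t δ := by ring
      linarith
    have hfinal : (sfun δ)^2 < (|astar| + ε)^2 := by
      rw [hξs δ, hξq] at h3
      have h8 : (sfun δ)^2 * (β 0)^2 < (|astar| + ε)^2 * (β 0)^2 := by nlinarith [h3, h5]
      exact lt_of_mul_lt_mul_right h8 (pow_pos hβ0 2).le
    rw [Real.dist_eq]
    exact habs_close ε hε (sfun δ) (hsA δ hδ) hfinal
  have hNDlowfun : Filter.Tendsto (fun δ => (sfun δ)^2 * (β 0)^2 / ((β 0)^2 + t δ * (M * Qb))) L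
      (nhds (astar^2)) := by
    have h1 : Filter.Tendsto (fun δ => (sfun δ)^2 * (β 0)^2) L (nhds (astar^2 * (β 0)^2)) :=
      (hstend.pow 2).mul_const _
    have h2 : Filter.Tendsto (fun δ => (β 0)^2 + t δ * (M * Qb)) L
        (nhds ((β 0)^2 + 0 * (M * Qb))) :=
      tendsto_const_nhds.add (htt0.mul_const _)
    have h3 := h1.div h2 (by
      rw [zero_mul, add_zero]
      exact pow_ne_zero 2 hβ0.ne')
    have h4 : astar^2 * (β 0)^2 / ((β 0)^2 + 0 * (M * Qb)) = astar^2 := by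
      rw [zero_mul, add_zero]
      exact mul_div_cancel_right₀ _ (pow_ne_zero 2 hβ0.ne')
    rwa [h4] at h3
  have hNDlo : ∀ δ ∈ I, (sfun δ)^2 * (β 0)^2 / ((β 0)^2 + t δ * (M * Qb)) ≤ N δ / D δ := by
    intro δ hδ
    have ht1 : 0 < t δ := htpos δ hδ
    have hinv : (t δ)⁻¹ ≠ 0 := inv_ne_zero ht1.ne'
    have hcancel : (sfun δ)^2 * (β 0)^2 / ((β 0)^2 + t δ * (M * Qb))
        = ((sfun δ)^2 * (β 0)^2 * (t δ)⁻¹) / (((β 0)^2 + t δ * (M * Qb)) * (t δ)⁻¹) :=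
      (mul_div_mul_right _ _ hinv).symm
    have e0 : t δ * (t δ)⁻¹ = 1 := mul_inv_cancel₀ ht1.ne'
    have hden : ((β 0)^2 + t δ * (M * Qb)) * (t δ)⁻¹ = (β 0)^2 * (t δ)⁻¹ + M * Qb := by
      calc ((β 0)^2 + t δ * (M * Qb)) * (t δ)⁻¹
          = (β 0)^2 * (t δ)⁻¹ + (M * Qb) * (t δ * (t δ)⁻¹) := by ring
      _ = (β 0)^2 * (t δ)⁻¹ + M * Qb := by rw [e0, mul_one]
    rw [hcancel, hden]
    apply div_le_div₀ (hNnonneg δ hδ)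
    · have hs := hSumlo δ hδ (ξ (pstar δ))
      rw [hξs δ] at hs
      calc (sfun δ)^2 * (β 0)^2 * (t δ)⁻¹ = (sfun δ * β 0)^2 * (t δ)⁻¹ := by ring
      _ ≤ N δ := hs
    · exact hDpos δ hδ
    · exact hSumhi δ hδ β
  have hND : Filter.Tendsto (fun δ => N δ / D δ) L (nhds (astar^2)) := by
    rw [Metric.tendsto_nhds]
    intro ε hε
    have hopen : IsOpen {y : ℝ | y^2 < astar^2 + ε/2} :=
      isOpen_lt (continuous_pow 2) continuous_const
    have hmem : astar ∈ {y : ℝ | y^2 < astar^2 + ε/2} := by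
      show astar^2 < astar^2 + ε/2
      linarith
    obtain ⟨yq, hyU, hyA⟩ := mem_closure_iff.mp hastar _ hopen hmem
    obtain ⟨q2, hq2K, hq2y⟩ := hyA
    have hyq : yq = ξ q2 0 / β 0 := by rw [← hq2y]; exact hAA q2
    have hξq2 : ξ q2 0 = yq * β 0 := by rw [hyq]; exact (div_mul_cancel₀ _ hβ0.ne').symm
    have hysq : yq^2 < astar^2 + ε/2 := hyU
    have hMQ : 0 ≤ M * Qxf q2 := mul_nonneg hMpos.le (hQxf_nn q2)
    have hB2 : (0:ℝ) < (ε/2) * (β 0)^2 / (M * Qxf q2 + 1) := by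
      apply div_pos (mul_pos (by linarith) (pow_pos hβ0 2))
      linarith
    filter_upwards [hmemI, htsmall _ hB2,
      hNDlowfun.eventually (lt_mem_nhds (by linarith : astar^2 - ε < astar^2))]
      with δ hδ htδ hlo
    have ht1 : 0 < t δ := htpos δ hδ
    have hlower : astar^2 - ε < N δ / D δ := lt_of_lt_of_le hlo (hNDlo δ hδ)
    have hN1 : N δ ≤ (yq * β 0)^2 * (t δ)⁻¹ + M * Qxf q2 := by
      rw [← hξq2]
      exact (hNopt δ hδ q2 hq2K).trans (hSumhi δ hδ (ξ q2))
    have hD1 : (β 0)^2 * (t δ)⁻¹ ≤ D δ := hSumlo δ hδ β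
    have hXnn : 0 ≤ yq^2 + t δ * (M * Qxf q2) / (β 0)^2 :=
      add_nonneg (sq_nonneg _)
        (div_nonneg (mul_nonneg ht1.le hMQ) (sq_nonneg _))
    have e0 : t δ * (t δ)⁻¹ = 1 := mul_inv_cancel₀ ht1.ne'
    have hup : N δ / D δ ≤ yq^2 + t δ * (M * Qxf q2) / (β 0)^2 := by
      rw [div_le_iff₀ (hDpos δ hδ)]
      have e1 : (yq^2 + t δ * (M * Qxf q2) / (β 0)^2) * ((β 0)^2 * (t δ)⁻¹)
          = (yq * β 0)^2 * (t δ)⁻¹ + (M * Qxf q2) * (t δ * (t δ)⁻¹) := by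
        field_simp
      have e2 := mul_le_mul_of_nonneg_left hD1 hXnn
      rw [e1, e0, mul_one] at e2
      linarith
    have hsm : t δ * (M * Qxf q2) / (β 0)^2 < ε/2 := by
      have h6 : t δ * (M * Qxf q2 + 1) < (ε/2) * (β 0)^2 :=
        (lt_div_iff₀ (by linarith)).mp htδ
      have h8 : t δ * (M * Qxf q2) ≤ t δ * (M * Qxf q2 + 1) :=
        mul_le_mul_of_nonneg_left (by linarith) ht1.le
      exact (div_lt_iff₀ (pow_pos hβ0 2)).mpr (lt_of_le_of_lt h8 h6)
    rw [Real.dist_eq, abs_lt]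
    constructor <;> linarith
  set C2 : ℝ := M^2 * (2*Qb + 2*(Sx q0 / m)) with hC2
  have hSxq0m : 0 ≤ Sx q0 / m := div_nonneg (hSx_nn q0) hmpos.le
  have hC2nn : 0 ≤ C2 := by
    rw [hC2]
    have h1 : 0 ≤ 2*Qb + 2*(Sx q0/m) := by linarith [hQb_nn]
    exact mul_nonneg (sq_nonneg M) h1
  have hglo : Filter.Tendsto
      (fun δ => (1 - sfun δ)^2 * (β 0)^2 / ((β 0)^2 + (t δ)^2 * (M^2 * Qb))) L
      (nhds ((1 - astar)^2)) := by
    have h1 : Filter.Tendsto (fun δ => (1 - sfun δ)^2 * (β 0)^2) L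
        (nhds ((1 - astar)^2 * (β 0)^2)) :=
      ((tendsto_const_nhds.sub hstend).pow 2).mul_const _
    have h2 : Filter.Tendsto (fun δ => (β 0)^2 + (t δ)^2 * (M^2 * Qb)) L
        (nhds ((β 0)^2 + 0^2 * (M^2 * Qb))) :=
      tendsto_const_nhds.add ((htt0.pow 2).mul_const _)
    have h3 := h1.div h2 (by
      rw [zero_pow (by norm_num : 2 ≠ 0), zero_mul, add_zero]
      exact pow_ne_zero 2 hβ0.ne')
    have h4 : (1 - astar)^2 * (β 0)^2 / ((β 0)^2 + 0^2 * (M^2 * Qb)) = (1 - astar)^2 := by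
      rw [zero_pow (by norm_num : 2 ≠ 0), zero_mul, add_zero]
      exact mul_div_cancel_right₀ _ (pow_ne_zero 2 hβ0.ne')
    rwa [h4] at h3
  have hghi : Filter.Tendsto (fun δ => (1 - sfun δ)^2 + t δ * (C2 / (β 0)^2)) L
      (nhds ((1 - astar)^2)) := by
    have h1 : Filter.Tendsto (fun δ => (1 - sfun δ)^2 + t δ * (C2 / (β 0)^2)) L
        (nhds ((1 - astar)^2 + 0 * (C2 / (β 0)^2))) :=
      ((tendsto_const_nhds.sub hstend).pow 2).add (htt0.mul_const _)
    simpa using h1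
  have hv0 : ∀ δ, β 0 - ξ (pstar δ) 0 = (1 - sfun δ) * β 0 := by
    intro δ
    rw [hξs δ]
    ring
  have hloB : ∀ᶠ δ in L,
      (1 - sfun δ)^2 * (β 0)^2 / ((β 0)^2 + (t δ)^2 * (M^2 * Qb)) ≤ Num δ / Den δ := by
    filter_upwards [hmemI] with δ hδ
    have ht1 := htpos δ hδ
    have hinv2 : ((t δ)⁻¹)^2 ≠ 0 := pow_ne_zero 2 (inv_ne_zero ht1.ne')
    have e0 : (t δ)^2 * ((t δ)⁻¹)^2 = 1 := by
      rw [← mul_pow, mul_inv_cancel₀ ht1.ne', one_pow]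
    have hNum1 : (1 - sfun δ)^2 * (β 0)^2 * ((t δ)⁻¹)^2 ≤ Num δ := by
      have hs := hSum2lo δ hδ (fun i => β i - ξ (pstar δ) i)
      have hv : (β 0 - ξ (pstar δ) 0)^2 = (1 - sfun δ)^2 * (β 0)^2 := by
        rw [hv0 δ]; ring
      calc (1 - sfun δ)^2 * (β 0)^2 * ((t δ)⁻¹)^2
          = (β 0 - ξ (pstar δ) 0)^2 * ((t δ)⁻¹)^2 := by rw [hv]
      _ ≤ Num δ := hs
    have hDen1 : Den δ ≤ (β 0)^2 * ((t δ)⁻¹)^2 + M^2 * Qb := hSum2hi δ hδ β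
    have hNumnn : 0 ≤ Num δ :=
      Finset.sum_nonneg fun i _ => mul_nonneg (sq_nonneg _) (sq_nonneg _)
    have hcancel : (1 - sfun δ)^2 * (β 0)^2 / ((β 0)^2 + (t δ)^2 * (M^2 * Qb))
        = ((1 - sfun δ)^2 * (β 0)^2 * ((t δ)⁻¹)^2)
          / (((β 0)^2 + (t δ)^2 * (M^2 * Qb)) * ((t δ)⁻¹)^2) :=
      (mul_div_mul_right _ _ hinv2).symm
    have hden : ((β 0)^2 + (t δ)^2 * (M^2 * Qb)) * ((t δ)⁻¹)^2
        = (β 0)^2 * ((t δ)⁻¹)^2 + M^2 * Qb := by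
      calc ((β 0)^2 + (t δ)^2 * (M^2 * Qb)) * ((t δ)⁻¹)^2
          = (β 0)^2 * ((t δ)⁻¹)^2 + (M^2 * Qb) * ((t δ)^2 * ((t δ)⁻¹)^2) := by ring
      _ = (β 0)^2 * ((t δ)⁻¹)^2 + M^2 * Qb := by rw [e0, mul_one]
    rw [hcancel, hden]
    exact div_le_div₀ hNumnn hNum1 (hDenpos δ hδ) hDen1
  have hhiB : ∀ᶠ δ in L, Num δ / Den δ ≤ (1 - sfun δ)^2 + t δ * (C2 / (β 0)^2) := by
    filter_upwards [hmemI] with δ hδ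
    have ht1 := htpos δ hδ
    have hti : 1 ≤ (t δ)⁻¹ := (one_le_inv₀ ht1).mpr (htle1 δ hδ)
    have hQxp : Qxf (pstar δ) ≤ Sx (pstar δ) :=
      Finset.sum_le_sum_of_subset_of_nonneg (Finset.erase_subset _ _)
        (fun i _ _ => sq_nonneg _)
    have hmSx : m * Sx (pstar δ) ≤ Sx q0 * (t δ)⁻¹ :=
      le_trans (hSumm δ hδ (ξ (pstar δ)))
        (le_trans (hNopt δ hδ q0 hq0) (hSumt δ hδ (ξ q0)))
    have hSxp2 : Sx (pstar δ) ≤ (Sx q0 / m) * (t δ)⁻¹ := by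
      have h1 : m * Sx (pstar δ) / m ≤ Sx q0 * (t δ)⁻¹ / m :=
        (div_le_div_iff_of_pos_right hmpos).mpr hmSx
      have h2 : m * Sx (pstar δ) / m = Sx (pstar δ) := by
        rw [mul_comm]
        exact mul_div_cancel_right₀ _ hmpos.ne'
      have h3 : Sx q0 * (t δ)⁻¹ / m = (Sx q0 / m) * (t δ)⁻¹ := by ring
      rw [h2, h3] at h1
      exact h1
    have htail : ∑ i ∈ Finset.univ.erase 0, (β i - ξ (pstar δ) i)^2
        ≤ 2*Qb + 2*Qxf (pstar δ) := by
      have h1 : ∀ i ∈ Finset.univ.erase 0,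
          (β i - ξ (pstar δ) i)^2 ≤ 2*(β i)^2 + 2*(ξ (pstar δ) i)^2 := by
        intro i _
        nlinarith [sq_nonneg (β i + ξ (pstar δ) i)]
      calc ∑ i ∈ Finset.univ.erase 0, (β i - ξ (pstar δ) i)^2
          ≤ ∑ i ∈ Finset.univ.erase 0, (2*(β i)^2 + 2*(ξ (pstar δ) i)^2) :=
            Finset.sum_le_sum h1
      _ = 2*Qb + 2*Qxf (pstar δ) := by
            rw [Finset.sum_add_distrib, ← Finset.mul_sum, ← Finset.mul_sum]
    have htail2 : ∑ i ∈ Finset.univ.erase 0, (β i - ξ (pstar δ) i)^2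
        ≤ (2*Qb + 2*(Sx q0/m)) * (t δ)⁻¹ := by
      have h1 : Qxf (pstar δ) ≤ (Sx q0 / m) * (t δ)⁻¹ := hQxp.trans hSxp2
      have h2 : 2*Qb ≤ 2*Qb * (t δ)⁻¹ := by nlinarith [hQb_nn, hti]
      have h3 : (2*Qb + 2*(Sx q0/m)) * (t δ)⁻¹
          = 2*Qb * (t δ)⁻¹ + 2*((Sx q0/m) * (t δ)⁻¹) := by ring
      rw [h3]
      linarith [htail]
    have hNum2 : Num δ ≤ (1 - sfun δ)^2 * (β 0)^2 * ((t δ)⁻¹)^2 + C2 * (t δ)⁻¹ := by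
      have hs := hSum2hi δ hδ (fun i => β i - ξ (pstar δ) i)
      have hv : (β 0 - ξ (pstar δ) 0)^2 = (1 - sfun δ)^2 * (β 0)^2 := by
        rw [hv0 δ]; ring
      have h4 : M^2 * (∑ i ∈ Finset.univ.erase 0, (β i - ξ (pstar δ) i)^2)
          ≤ M^2 * ((2*Qb + 2*(Sx q0/m)) * (t δ)⁻¹) :=
        mul_le_mul_of_nonneg_left htail2 (sq_nonneg M)
      have h5 : M^2 * ((2*Qb + 2*(Sx q0/m)) * (t δ)⁻¹) = C2 * (t δ)⁻¹ := by
        rw [hC2]; ring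
      calc Num δ ≤ (β 0 - ξ (pstar δ) 0)^2 * ((t δ)⁻¹)^2
            + M^2 * (∑ i ∈ Finset.univ.erase 0, (β i - ξ (pstar δ) i)^2) := hs
      _ ≤ (β 0 - ξ (pstar δ) 0)^2 * ((t δ)⁻¹)^2 + C2 * (t δ)⁻¹ := by
            rw [← h5]; linarith
      _ = (1 - sfun δ)^2 * (β 0)^2 * ((t δ)⁻¹)^2 + C2 * (t δ)⁻¹ := by rw [hv]
    have hDen2 : (β 0)^2 * ((t δ)⁻¹)^2 ≤ Den δ := hSum2lo δ hδ β
    have hDpos2 : 0 < (β 0)^2 * ((t δ)⁻¹)^2 :=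
      mul_pos (pow_pos hβ0 2) (pow_pos (inv_pos.mpr ht1) 2)
    have hq1 : Num δ / Den δ
        ≤ ((1 - sfun δ)^2 * (β 0)^2 * ((t δ)⁻¹)^2 + C2 * (t δ)⁻¹)
          / ((β 0)^2 * ((t δ)⁻¹)^2) := by
      apply div_le_div₀ ?_ hNum2 hDpos2 hDen2
      have : 0 ≤ C2 * (t δ)⁻¹ := mul_nonneg hC2nn (inv_pos.mpr ht1).le
      have h6 : 0 ≤ (1 - sfun δ)^2 * (β 0)^2 * ((t δ)⁻¹)^2 :=
        mul_nonneg (mul_nonneg (sq_nonneg _) (sq_nonneg _)) (sq_nonneg _)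
      linarith
    have hq2 : ((1 - sfun δ)^2 * (β 0)^2 * ((t δ)⁻¹)^2 + C2 * (t δ)⁻¹)
        / ((β 0)^2 * ((t δ)⁻¹)^2) = (1 - sfun δ)^2 + t δ * (C2 / (β 0)^2) := by
      field_simp
    rw [hq2] at hq1
    exact hq1
  have hNumDen : Filter.Tendsto (fun δ => Num δ / Den δ) L (nhds ((1 - astar)^2)) :=
    tendsto_of_tendsto_of_tendsto_of_le_of_le' hglo hghi hloB hhiB
  refine ⟨⟨astar, hastar⟩, isClosed_closure, hOrd, astar, hastar, habs_min, huniq, ?_, ?_, ?_⟩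
  · have heq : (fun δ : ℝ => AAstat (w 0) a c (pstar δ)) = sfun :=
      funext fun δ => hAA (pstar δ)
    rw [heq]
    exact hstend
  · have h1 : Filter.Tendsto (fun δ => 1 - N δ / D δ) L (nhds (1 - astar^2)) :=
      tendsto_const_nhds.sub hND
    exact Filter.Tendsto.congr' (hmemI.mono fun δ hδ => (hRpi_eq δ hδ).symm) h1
  · exact Filter.Tendsto.congr' (hmemI.mono fun δ hδ => (hRv_eq δ hδ).symm) hNumDen
end

section
/- Suppose there exists p̃ ∈ K with ⟨w₁, p̃⟩ = ⟨w₁, p^ur⟩. (This holds, in particular, when K is invariant under translations by multiples of 𝟙, as for regulations bounding price differences; when K = {p : ⟨θ, p⟩ ≤ M} for a weight θ ∈ ℝⁿ not proportional to w₁; and when K = {p : p̲ ≤ p ≤ p̄} with ⟨w₁, p̲⟩ ≤ ⟨w₁, p^ur⟩ ≤ ⟨w₁, p̄⟩.) Then, as δ tends to 1/λ₁ from the left, R_Π(p*(δ), δ) → 1 and R_V(p*(δ), δ) → 1: the price regulation is welfare-neutral in the limit of large spillovers. -/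
open Matrix

lemma qf_aux {n : ℕ} (w : Fin n → Fin n → ℝ) (d u v : Fin n → ℝ) :
    u ⬝ᵥ (((Matrix.of w)ᵀ * Matrix.diagonal d * Matrix.of w) *ᵥ v)
      = ∑ i, d i * (w i ⬝ᵥ u) * (w i ⬝ᵥ v) := by
  rw [← Matrix.mulVec_mulVec, ← Matrix.mulVec_mulVec, Matrix.dotProduct_mulVec,
    Matrix.vecMul_transpose, dotProduct]
  refine Finset.sum_congr rfl fun i _ => ?_
  have hu : (Matrix.of w *ᵥ u) i = w i ⬝ᵥ u := rfl
  have hv : (Matrix.of w *ᵥ v) i = w i ⬝ᵥ v := rfl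
  rw [Matrix.mulVec_diagonal, hu, hv]
  ring

lemma hmat_eq {n : ℕ} (G : Matrix (Fin n) (Fin n) ℝ) (δ : ℝ)
    (w : Fin n → Fin n → ℝ) (lam : Fin n → ℝ)
    (horth : ∀ i j, w i ⬝ᵥ w j = if i = j then (1 : ℝ) else 0)
    (heig : ∀ i, G *ᵥ w i = lam i • w i)
    (hν : ∀ i, 1 - δ * lam i ≠ 0) :
    Hmat G δ = (Matrix.of w)ᵀ * Matrix.diagonal (fun i => (1 - δ * lam i)⁻¹) * Matrix.of w := by
  set W : Matrix (Fin n) (Fin n) ℝ := Matrix.of w with hW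
  have hWWT : W * Wᵀ = 1 := by
    ext i j
    simpa [hW, Matrix.mul_apply, Matrix.one_apply, dotProduct] using horth i j
  have hWTW : Wᵀ * W = 1 := mul_eq_one_comm.mp hWWT
  have hGW : G * Wᵀ = Wᵀ * Matrix.diagonal lam := by
    ext k i
    have h := congrFun (heig i) k
    simp only [Matrix.mulVec, dotProduct, Pi.smul_apply, smul_eq_mul] at h
    simp only [Matrix.mul_apply, Matrix.transpose_apply, Matrix.diagonal_apply, hW,
      Matrix.of_apply, mul_ite, mul_zero, Finset.sum_ite_eq', Finset.mem_univ, if_true]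
    rw [h, mul_comm]
  set Dμ := Matrix.diagonal (fun i => (1 - δ * lam i)⁻¹) with hDμ
  have hdiag : Dμ - δ • (Matrix.diagonal lam * Dμ) = 1 := by
    rw [hDμ, Matrix.diagonal_mul_diagonal]
    ext i j
    rcases eq_or_ne i j with rfl | hij
    · have h := hν i
      simp only [Matrix.sub_apply, Matrix.smul_apply, Matrix.diagonal_apply_eq,
        Matrix.one_apply_eq, smul_eq_mul]
      field_simp
    · simp [Matrix.diagonal_apply_ne _ hij, Matrix.one_apply_ne hij]
  have hBH : (1 - δ • G) * (Wᵀ * Dμ * W) = 1 := by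
    have e1 : G * (Wᵀ * Dμ * W) = Wᵀ * (Matrix.diagonal lam * Dμ) * W := by
      simp only [← Matrix.mul_assoc]
      rw [hGW]
    rw [sub_mul, one_mul, Matrix.smul_mul, e1, ← Matrix.smul_mul, ← Matrix.mul_smul,
      ← sub_mul, ← Matrix.mul_sub, hdiag, Matrix.mul_one, hWTW]
  have h := Matrix.inv_eq_right_inv hBH
  rw [Hmat, h]

lemma split1 {n : ℕ} (a c p : Fin n → ℝ) :
    p - c = (1/2:ℝ) • (a - c) + (p - pUR a c) := by
  funext k; simp [pUR]; ring
lemma split2 {n : ℕ} (a c p : Fin n → ℝ) :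
    a - p = (1/2:ℝ) • (a - c) - (p - pUR a c) := by
  funext k; simp [pUR]; ring

lemma profit_expand {n : ℕ} (G : Matrix (Fin n) (Fin n) ℝ) (δ : ℝ)
    (w : Fin n → Fin n → ℝ) (lam : Fin n → ℝ)
    (horth : ∀ i j, w i ⬝ᵥ w j = if i = j then (1 : ℝ) else 0)
    (heig : ∀ i, G *ᵥ w i = lam i • w i)
    (hν : ∀ i, 1 - δ * lam i ≠ 0) (a c p : Fin n → ℝ) :
    profit G δ a c p = ∑ i, (1 - δ * lam i)⁻¹ *
      ((w i ⬝ᵥ ((1/2:ℝ) • (a - c)))^2 - (w i ⬝ᵥ (p - pUR a c))^2) := by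
  rw [profit, hmat_eq G δ w lam horth heig hν, qf_aux]
  refine Finset.sum_congr rfl fun i _ => ?_
  have e1 : w i ⬝ᵥ (p - c) = w i ⬝ᵥ ((1/2:ℝ) • (a - c)) + w i ⬝ᵥ (p - pUR a c) := by
    rw [← dotProduct_add, ← split1]
  have e2 : w i ⬝ᵥ (a - p) = w i ⬝ᵥ ((1/2:ℝ) • (a - c)) - w i ⬝ᵥ (p - pUR a c) := by
    rw [← dotProduct_sub, ← split2]
  rw [e1, e2]
  ring

lemma surplus_expand {n : ℕ} (G : Matrix (Fin n) (Fin n) ℝ) (δ : ℝ)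
    (w : Fin n → Fin n → ℝ) (lam : Fin n → ℝ)
    (horth : ∀ i j, w i ⬝ᵥ w j = if i = j then (1 : ℝ) else 0)
    (heig : ∀ i, G *ᵥ w i = lam i • w i)
    (hν : ∀ i, 1 - δ * lam i ≠ 0) (a c p : Fin n → ℝ) :
    surplus G δ a p = (1/2:ℝ) * ∑ i, ((1 - δ * lam i)⁻¹)^2 *
      (w i ⬝ᵥ ((1/2:ℝ) • (a - c)) - w i ⬝ᵥ (p - pUR a c))^2 := by
  have hWWT : Matrix.of w * (Matrix.of w)ᵀ = 1 := by
    ext i j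
    simpa [Matrix.mul_apply, Matrix.one_apply, dotProduct] using horth i j
  have hH2 : Hmat G δ * Hmat G δ
      = (Matrix.of w)ᵀ * Matrix.diagonal (fun i => ((1 - δ * lam i)⁻¹)^2) * Matrix.of w := by
    rw [hmat_eq G δ w lam horth heig hν]
    have e : (Matrix.of w)ᵀ * Matrix.diagonal (fun i => (1 - δ * lam i)⁻¹) * Matrix.of w *
        ((Matrix.of w)ᵀ * Matrix.diagonal (fun i => (1 - δ * lam i)⁻¹) * Matrix.of w)
        = (Matrix.of w)ᵀ * (Matrix.diagonal (fun i => (1 - δ * lam i)⁻¹) *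
            ((Matrix.of w * (Matrix.of w)ᵀ) *
              (Matrix.diagonal (fun i => (1 - δ * lam i)⁻¹) * Matrix.of w))) := by
      simp only [Matrix.mul_assoc]
    rw [e, hWWT, one_mul, ← Matrix.mul_assoc (Matrix.diagonal _), Matrix.diagonal_mul_diagonal,
      ← Matrix.mul_assoc]
    congr 2
    funext i
    simp [sq]
  rw [surplus, hH2, qf_aux]
  congr 1
  refine Finset.sum_congr rfl fun i _ => ?_
  have e2 : w i ⬝ᵥ (a - p) = w i ⬝ᵥ ((1/2:ℝ) • (a - c)) - w i ⬝ᵥ (p - pUR a c) := by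
    rw [← dotProduct_sub, ← split2]
  rw [e2]
  ring

set_option maxHeartbeats 1000000 in
theorem stmt10 {n : ℕ} [NeZero n]
    (G : Matrix (Fin n) (Fin n) ℝ) (hGsym : G.IsSymm)
    (hGnn : ∀ i j, 0 ≤ G i j) (hGdiag : ∀ i, G i i = 0)
    (w : Fin n → Fin n → ℝ) (lam : Fin n → ℝ)
    (horth : ∀ i j, w i ⬝ᵥ w j = if i = j then (1 : ℝ) else 0)
    (heig : ∀ i, G *ᵥ w i = lam i • w i)
    (hgap : ∀ i, i ≠ 0 → lam i < lam 0)
    (hlam0 : 0 < lam 0)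
    (hw0 : ∀ k, 0 < w 0 k)
    (hpd : ∀ δ ∈ Set.Ico (0 : ℝ) (1 / lam 0), (Hmat G δ).PosDef)
    (a c : Fin n → ℝ) (hac : ∀ i, c i < a i)
    (K : Set (Fin n → ℝ)) (hKne : K.Nonempty) (hKcl : IsClosed K) (hKconv : Convex ℝ K)
    (pstar : ℝ → Fin n → ℝ)
    (hps : ∀ δ ∈ Set.Ico (0 : ℝ) (1 / lam 0),
      pstar δ ∈ K ∧ ∀ q ∈ K, profit G δ a c q ≤ profit G δ a c (pstar δ))
    (hneutral : ∃ pt ∈ K, w 0 ⬝ᵥ pt = w 0 ⬝ᵥ pUR a c) :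
    Filter.Tendsto (fun δ : ℝ => Rpi G δ a c (pstar δ))
      (nhdsWithin (1 / lam 0) (Set.Ico 0 (1 / lam 0))) (nhds 1) ∧
    Filter.Tendsto (fun δ : ℝ => Rv G δ a c (pstar δ))
      (nhdsWithin (1 / lam 0) (Set.Ico 0 (1 / lam 0))) (nhds 1) := by
  classical
  obtain ⟨pt, hptK, hpt⟩ := hneutral
  have hL : 0 < lam 0 := hlam0
  have hnen : Nonempty (Fin n) := ⟨0⟩
  have hm0 : 0 < w 0 ⬝ᵥ ((1/2:ℝ) • (a - c)) := by
    rw [dotProduct]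
    refine Finset.sum_pos (fun k _ => ?_) Finset.univ_nonempty
    have h1 := hac k
    have h2 : (0:ℝ) < ((1/2:ℝ) • (a - c)) k := by
      simp only [Pi.smul_apply, Pi.sub_apply, smul_eq_mul]
      linarith
    exact mul_pos (hw0 k) h2
  have hdt0 : w 0 ⬝ᵥ (pt - pUR a c) = 0 := by
    rw [dotProduct_sub, hpt, sub_self]
  set cm : Fin n → ℝ := fun i => w i ⬝ᵥ ((1/2:ℝ) • (a - c)) with hcm
  have hm0' : 0 < cm 0 := hm0
  set gg : Fin n → ℝ := fun i => min 1 (1 - lam i / lam 0) with hgg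
  set hh : Fin n → ℝ := fun i => max 1 (1 - lam i / lam 0) with hhh
  have hggpos : ∀ i, i ≠ 0 → 0 < gg i := by
    intro i hi
    have h1 : lam i / lam 0 < 1 := (div_lt_one hL).mpr (hgap i hi)
    simp only [hgg, lt_min_iff]
    exact ⟨one_pos, by linarith⟩
  have hhhpos : ∀ i, 0 < hh i := fun i => lt_of_lt_of_le one_pos (le_max_left _ _)
  set C1 : ℝ := ∑ i, (if i = 0 then 0 else (gg i)⁻¹ * (w i ⬝ᵥ (pt - pUR a c))^2) with hC1def
  have hC1 : 0 ≤ C1 := by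
    refine Finset.sum_nonneg fun i _ => ?_
    split
    · exact le_rfl
    · next hi =>
      have := hggpos i hi
      positivity
  set C3 : ℝ := ∑ i, (if i = 0 then 0 else ((gg i)⁻¹)^2 * (3*(cm i)^2 + 2*C1*hh i)) with hC3def
  have hC3 : 0 ≤ C3 := by
    refine Finset.sum_nonneg fun i _ => ?_
    split
    · exact le_rfl
    · next hi =>
      have h1 := hhhpos i
      have h2 := hggpos i hi
      positivity
  -- the per-δ estimates
  have main : ∀ δ ∈ Set.Ico (0:ℝ) (1 / lam 0),
      (1 - C1 * (1 - δ * lam 0) / (cm 0)^2 ≤ Rpi G δ a c (pstar δ)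
        ∧ Rpi G δ a c (pstar δ) ≤ 1)
      ∧ |Rv G δ a c (pstar δ) - 1| ≤
          (C1 * (1 - δ * lam 0) + 2 * cm 0 * Real.sqrt (C1 * (1 - δ * lam 0))
            + C3 * (1 - δ * lam 0)^2) / (cm 0)^2 := by
    rintro δ ⟨hδ0, hδ1⟩
    set ε : ℝ := 1 - δ * lam 0 with hεdef
    have hδL : δ * lam 0 < 1 := by
      have h := mul_lt_mul_of_pos_right hδ1 hL
      rwa [one_div, inv_mul_cancel₀ hL.ne'] at h
    have hεpos : 0 < ε := by simp only [hεdef]; linarith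
    -- eigenvalue denominators
    have hν : ∀ i, 0 < 1 - δ * lam i := by
      intro i
      have hle : lam i ≤ lam 0 := by
        rcases eq_or_ne i 0 with rfl | hi
        · exact le_rfl
        · exact (hgap i hi).le
      rcases le_or_gt (lam i) 0 with h | h
      · have h2 : δ * lam i ≤ δ * 0 := mul_le_mul_of_nonneg_left h hδ0
        rw [mul_zero] at h2
        linarith
      · linarith [mul_le_mul_of_nonneg_left hle hδ0]
    have hνne : ∀ i, 1 - δ * lam i ≠ 0 := fun i => (hν i).ne'
    have hgν : ∀ i, i ≠ 0 → gg i ≤ 1 - δ * lam i := by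
      intro i _
      rcases le_or_gt (lam i) 0 with h | h
      · refine (min_le_left _ _).trans ?_
        have h2 : δ * lam i ≤ δ * 0 := mul_le_mul_of_nonneg_left h hδ0
        rw [mul_zero] at h2
        linarith
      · refine (min_le_right _ _).trans ?_
        have h2 : δ * lam i ≤ (1 / lam 0) * lam i := mul_le_mul_of_nonneg_right hδ1.le h.le
        have h3 : (1 / lam 0) * lam i = lam i / lam 0 := by ring
        linarith
    have hνh : ∀ i, 1 - δ * lam i ≤ hh i := by
      intro i
      rcases le_or_gt 0 (lam i) with h | h
      · refine le_trans ?_ (le_max_left _ _)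
        have h2 : δ * 0 ≤ δ * lam i := mul_le_mul_of_nonneg_left h hδ0
        rw [mul_zero] at h2
        linarith
      · refine le_trans ?_ (le_max_right _ _)
        have h2 : δ * (-lam i) ≤ (1 / lam 0) * (-lam i) :=
          mul_le_mul_of_nonneg_right hδ1.le (by linarith)
        have h3 : (1 / lam 0) * (-lam i) = -(lam i / lam 0) := by ring
        linarith
    have hμpos : ∀ i, 0 < (1 - δ * lam i)⁻¹ := fun i => inv_pos.mpr (hν i)
    have hμg : ∀ i, i ≠ 0 → (1 - δ * lam i)⁻¹ ≤ (gg i)⁻¹ := fun i hi =>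
      inv_anti₀ (hggpos i hi) (hgν i hi)
    have hμh : ∀ i, (hh i)⁻¹ ≤ (1 - δ * lam i)⁻¹ := fun i =>
      inv_anti₀ (hν i) (hνh i)
    have hμ0 : (1 - δ * lam 0)⁻¹ = ε⁻¹ := rfl
    -- expansions
    have hprofP := profit_expand G δ w lam horth heig hνne a c
    have hsurP := surplus_expand G δ w lam horth heig hνne a c
    set p : Fin n → ℝ := pstar δ with hpdef
    set A : ℝ := ∑ i, (1 - δ * lam i)⁻¹ * (cm i)^2 with hAdef
    set Ds : ℝ := ∑ i, (1 - δ * lam i)⁻¹ * (w i ⬝ᵥ (p - pUR a c))^2 with hDsdef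
    have hcdUR : ∀ i, w i ⬝ᵥ (pUR a c - pUR a c) = 0 := by
      intro i; rw [sub_self, dotProduct_zero]
    have hprofUR : profit G δ a c (pUR a c) = A := by
      rw [hprofP (pUR a c), hAdef]
      refine Finset.sum_congr rfl fun i _ => ?_
      rw [hcdUR i]
      ring
    have hprofp : profit G δ a c p = A - Ds := by
      rw [hprofP p, hAdef, hDsdef, ← Finset.sum_sub_distrib]
      refine Finset.sum_congr rfl fun i _ => ?_
      ring
    have hprofpt : profit G δ a c pt = A - ∑ i, (1 - δ * lam i)⁻¹ * (w i ⬝ᵥ (pt - pUR a c))^2 := by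
      rw [hprofP pt, hAdef, ← Finset.sum_sub_distrib]
      refine Finset.sum_congr rfl fun i _ => ?_
      ring
    have hA0 : (1 - δ * lam 0)⁻¹ * (cm 0)^2 ≤ A :=
      Finset.single_le_sum (f := fun i => (1 - δ * lam i)⁻¹ * (cm i)^2)
        (fun i _ => mul_nonneg (hμpos i).le (sq_nonneg _)) (Finset.mem_univ 0)
    have hAge : (cm 0)^2 / ε ≤ A := by
      have e : (cm 0)^2 / ε = (1 - δ * lam 0)⁻¹ * (cm 0)^2 := by
        rw [hμ0]; field_simp
      rw [e]; exact hA0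
    have hApos : 0 < A := lt_of_lt_of_le (div_pos (pow_pos hm0' 2) hεpos) hAge
    have hDs0 : 0 ≤ Ds :=
      Finset.sum_nonneg fun i _ => mul_nonneg (hμpos i).le (sq_nonneg _)
    have hle : profit G δ a c pt ≤ profit G δ a c p := (hps δ ⟨hδ0, hδ1⟩).2 pt hptK
    have hDtC1 : ∑ i, (1 - δ * lam i)⁻¹ * (w i ⬝ᵥ (pt - pUR a c))^2 ≤ C1 := by
      rw [hC1def]
      refine Finset.sum_le_sum fun i _ => ?_
      rcases eq_or_ne i 0 with rfl | hi
      · simp [hdt0]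
      · rw [if_neg hi]
        exact mul_le_mul_of_nonneg_right (hμg i hi) (sq_nonneg _)
    have hDsC1 : Ds ≤ C1 := by
      rw [hprofpt, hprofp] at hle
      linarith
    have hRpi : Rpi G δ a c p = (A - Ds) / A := by
      rw [Rpi, hprofp, hprofUR]
    refine ⟨⟨?_, ?_⟩, ?_⟩
    · -- lower bound for Rpi
      have h1 : Ds / A ≤ C1 * ε / (cm 0)^2 := by
        calc Ds / A ≤ C1 / ((cm 0)^2 / ε) :=
              div_le_div₀ hC1 hDsC1 (div_pos (pow_pos hm0' 2) hεpos) hAge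
          _ = C1 * ε / (cm 0)^2 := by
              rw [div_div_eq_mul_div]
      have h2 : (A - Ds) / A = 1 - Ds / A := by
        rw [sub_div, div_self hApos.ne']
      rw [hRpi, h2]
      linarith
    · rw [hRpi]
      exact div_le_one_of_le₀ (by linarith) hApos.le
    · -- Rv bound
      set N : ℝ := ∑ i, ((1 - δ * lam i)⁻¹)^2 * (cm i - w i ⬝ᵥ (p - pUR a c))^2 with hNdef
      set Dd : ℝ := ∑ i, ((1 - δ * lam i)⁻¹)^2 * (cm i)^2 with hDddef
      have hsurp : surplus G δ a p = (1/2:ℝ) * N := hsurP p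
      have hsurUR : surplus G δ a (pUR a c) = (1/2:ℝ) * Dd := by
        rw [hsurP (pUR a c), hDddef]
        congr 1
        refine Finset.sum_congr rfl fun i _ => ?_
        rw [hcdUR i, sub_zero]
      have hDdge : (cm 0)^2 / ε^2 ≤ Dd := by
        have h1 : ((1 - δ * lam 0)⁻¹)^2 * (cm 0)^2 ≤ Dd :=
          Finset.single_le_sum (f := fun i => ((1 - δ * lam i)⁻¹)^2 * (cm i)^2)
            (fun i _ => mul_nonneg (sq_nonneg _) (sq_nonneg _)) (Finset.mem_univ 0)
        have e : (cm 0)^2 / ε^2 = ((1 - δ * lam 0)⁻¹)^2 * (cm 0)^2 := by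
          rw [hμ0]; field_simp
        rw [e]; exact h1
      have hDdpos : 0 < Dd := lt_of_lt_of_le (div_pos (pow_pos hm0' 2) (pow_pos hεpos 2)) hDdge
      have hRv : Rv G δ a c p = N / Dd := by
        rw [Rv, hsurp, hsurUR, mul_div_mul_left _ _ (by norm_num : (1/2:ℝ) ≠ 0)]
      -- coefficient bounds
      have hd0sq : (w 0 ⬝ᵥ (p - pUR a c))^2 ≤ C1 * ε := by
        have h1 : (1 - δ * lam 0)⁻¹ * (w 0 ⬝ᵥ (p - pUR a c))^2 ≤ Ds :=
          Finset.single_le_sum (f := fun i => (1 - δ * lam i)⁻¹ * (w i ⬝ᵥ (p - pUR a c))^2)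
            (fun i _ => mul_nonneg (hμpos i).le (sq_nonneg _)) (Finset.mem_univ 0)
        have h2 : ε⁻¹ * (w 0 ⬝ᵥ (p - pUR a c))^2 ≤ C1 := by
          rw [← hμ0]; exact h1.trans hDsC1
        calc (w 0 ⬝ᵥ (p - pUR a c))^2
            = ε * (ε⁻¹ * (w 0 ⬝ᵥ (p - pUR a c))^2) := by field_simp
          _ ≤ ε * C1 := mul_le_mul_of_nonneg_left h2 hεpos.le
          _ = C1 * ε := mul_comm _ _
      have habs0 : |w 0 ⬝ᵥ (p - pUR a c)| ≤ Real.sqrt (C1 * ε) := by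
        rw [← Real.sqrt_sq_eq_abs]
        exact Real.sqrt_le_sqrt hd0sq
      have hdisq : ∀ i, i ≠ 0 → (w i ⬝ᵥ (p - pUR a c))^2 ≤ C1 * hh i := by
        intro i hi
        have h1 : (1 - δ * lam i)⁻¹ * (w i ⬝ᵥ (p - pUR a c))^2 ≤ Ds :=
          Finset.single_le_sum (f := fun j => (1 - δ * lam j)⁻¹ * (w j ⬝ᵥ (p - pUR a c))^2)
            (fun j _ => mul_nonneg (hμpos j).le (sq_nonneg _)) (Finset.mem_univ i)
        have h2 : (hh i)⁻¹ * (w i ⬝ᵥ (p - pUR a c))^2 ≤ C1 :=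
          le_trans (mul_le_mul_of_nonneg_right (hμh i) (sq_nonneg _)) (h1.trans hDsC1)
        have hhi := hhhpos i
        calc (w i ⬝ᵥ (p - pUR a c))^2
            = hh i * ((hh i)⁻¹ * (w i ⬝ᵥ (p - pUR a c))^2) := by field_simp
          _ ≤ hh i * C1 := mul_le_mul_of_nonneg_left h2 hhi.le
          _ = C1 * hh i := mul_comm _ _
      set B0 : ℝ := (C1 * ε + 2 * cm 0 * Real.sqrt (C1 * ε)) / ε^2 with hB0def
      have hB0 : 0 ≤ B0 := by
        have hs : 0 ≤ Real.sqrt (C1 * ε) := Real.sqrt_nonneg _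
        have h1 : 0 ≤ C1 * ε + 2 * cm 0 * Real.sqrt (C1 * ε) :=
          add_nonneg (mul_nonneg hC1 hεpos.le)
            (mul_nonneg (by linarith : (0:ℝ) ≤ 2 * cm 0) hs)
        exact div_nonneg h1 (sq_nonneg _)
      have hsplit : N - Dd
          = ∑ i, ((1 - δ * lam i)⁻¹)^2 * ((cm i - w i ⬝ᵥ (p - pUR a c))^2 - (cm i)^2) := by
        rw [hNdef, hDddef, ← Finset.sum_sub_distrib]
        refine Finset.sum_congr rfl fun i _ => ?_
        ring
      have hbound : |N - Dd| ≤ B0 + C3 := by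
        rw [hsplit]
        refine (Finset.abs_sum_le_sum_abs _ _).trans ?_
        have hterm : ∀ i ∈ Finset.univ,
            |((1 - δ * lam i)⁻¹)^2 * ((cm i - w i ⬝ᵥ (p - pUR a c))^2 - (cm i)^2)|
              ≤ (if i = 0 then B0 else ((gg i)⁻¹)^2 * (3*(cm i)^2 + 2*C1*hh i)) := by
          intro i _
          rcases eq_or_ne i 0 with rfl | hi
          · rw [if_pos rfl, abs_mul, abs_of_nonneg (sq_nonneg ((1 - δ * lam 0)⁻¹)), hμ0]
            have e : (cm 0 - w 0 ⬝ᵥ (p - pUR a c))^2 - (cm 0)^2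
                = (w 0 ⬝ᵥ (p - pUR a c))^2 - 2 * cm 0 * (w 0 ⬝ᵥ (p - pUR a c)) := by ring
            have h2 : |(cm 0 - w 0 ⬝ᵥ (p - pUR a c))^2 - (cm 0)^2|
                ≤ C1 * ε + 2 * cm 0 * Real.sqrt (C1 * ε) := by
              rw [e]
              refine (abs_sub _ _).trans ?_
              have e1 : |(w 0 ⬝ᵥ (p - pUR a c))^2| = (w 0 ⬝ᵥ (p - pUR a c))^2 :=
                abs_of_nonneg (sq_nonneg _)
              have e2 : |2 * cm 0 * (w 0 ⬝ᵥ (p - pUR a c))|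
                  = 2 * cm 0 * |w 0 ⬝ᵥ (p - pUR a c)| := by
                rw [abs_mul, abs_of_nonneg (by linarith : (0:ℝ) ≤ 2 * cm 0)]
              rw [e1, e2]
              have h3 : 2 * cm 0 * |w 0 ⬝ᵥ (p - pUR a c)| ≤ 2 * cm 0 * Real.sqrt (C1 * ε) :=
                mul_le_mul_of_nonneg_left habs0 (by linarith)
              linarith [hd0sq]
            calc (ε⁻¹)^2 * |(cm 0 - w 0 ⬝ᵥ (p - pUR a c))^2 - (cm 0)^2|
                ≤ (ε⁻¹)^2 * (C1 * ε + 2 * cm 0 * Real.sqrt (C1 * ε)) :=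
                  mul_le_mul_of_nonneg_left h2 (sq_nonneg _)
              _ = B0 := by rw [hB0def]; field_simp
          · rw [if_neg hi, abs_mul, abs_of_nonneg (sq_nonneg ((1 - δ * lam i)⁻¹))]
            have h2 : |(cm i - w i ⬝ᵥ (p - pUR a c))^2 - (cm i)^2|
                ≤ 3*(cm i)^2 + 2*C1*hh i := by
              have hq := hdisq i hi
              have hsq : (cm i - w i ⬝ᵥ (p - pUR a c))^2
                  ≤ 2*(cm i)^2 + 2*(w i ⬝ᵥ (p - pUR a c))^2 := by
                have key : 2*(cm i)^2 + 2*(w i ⬝ᵥ (p - pUR a c))^2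
                    - (cm i - w i ⬝ᵥ (p - pUR a c))^2
                    = (cm i + w i ⬝ᵥ (p - pUR a c))^2 := by ring
                linarith [sq_nonneg (cm i + w i ⬝ᵥ (p - pUR a c)), key]
              rw [abs_sub_le_iff]
              constructor
              · linarith [hq, hsq, sq_nonneg (cm i)]
              · linarith [sq_nonneg (cm i - w i ⬝ᵥ (p - pUR a c)),
                  mul_nonneg hC1 (hhhpos i).le, sq_nonneg (cm i)]
            have h3 : ((1 - δ * lam i)⁻¹)^2 ≤ ((gg i)⁻¹)^2 :=
              pow_le_pow_left₀ (hμpos i).le (hμg i hi) 2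
            calc ((1 - δ * lam i)⁻¹)^2 * |(cm i - w i ⬝ᵥ (p - pUR a c))^2 - (cm i)^2|
                ≤ ((1 - δ * lam i)⁻¹)^2 * (3*(cm i)^2 + 2*C1*hh i) :=
                  mul_le_mul_of_nonneg_left h2 (sq_nonneg _)
              _ ≤ ((gg i)⁻¹)^2 * (3*(cm i)^2 + 2*C1*hh i) := by
                  refine mul_le_mul_of_nonneg_right h3 ?_
                  linarith [sq_nonneg (cm i), mul_nonneg hC1 (hhhpos i).le]
        refine (Finset.sum_le_sum hterm).trans ?_
        have hsum : ∑ i, (if i = 0 then B0 else ((gg i)⁻¹)^2 * (3*(cm i)^2 + 2*C1*hh i))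
            = B0 + C3 := by
          have e : ∀ i : Fin n, (if i = 0 then B0 else ((gg i)⁻¹)^2 * (3*(cm i)^2 + 2*C1*hh i))
              = (if i = 0 then B0 else 0)
                + (if i = 0 then 0 else ((gg i)⁻¹)^2 * (3*(cm i)^2 + 2*C1*hh i)) := by
            intro i; split <;> simp
          rw [Finset.sum_congr rfl fun i _ => e i, Finset.sum_add_distrib,
            Finset.sum_ite_eq' Finset.univ (0 : Fin n) (fun _ => B0), hC3def]
          simp
        rw [hsum]
      have habsRv : |Rv G δ a c p - 1| = |N - Dd| / Dd := by
        rw [hRv, div_sub_one hDdpos.ne', abs_div, abs_of_pos hDdpos]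
      rw [habsRv]
      calc |N - Dd| / Dd ≤ (B0 + C3) / ((cm 0)^2 / ε^2) :=
            div_le_div₀ (by linarith) hbound (div_pos (pow_pos hm0' 2) (pow_pos hεpos 2)) hDdge
        _ = (C1 * ε + 2 * cm 0 * Real.sqrt (C1 * ε) + C3 * ε^2) / (cm 0)^2 := by
            rw [hB0def]
            field_simp
  -- limits
  set l := nhdsWithin (1 / lam 0) (Set.Ico (0:ℝ) (1 / lam 0)) with hldef
  have hεt : Filter.Tendsto (fun δ : ℝ => 1 - δ * lam 0) l (nhds 0) := by
    have hc : Continuous fun δ : ℝ => 1 - δ * lam 0 :=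
      continuous_const.sub (continuous_id.mul continuous_const)
    have h := hc.tendsto (1 / lam 0)
    have he : 1 - (1 / lam 0) * lam 0 = 0 := by field_simp; ring
    rw [he] at h
    exact h.mono_left nhdsWithin_le_nhds
  have hev : ∀ᶠ δ in l, δ ∈ Set.Ico (0:ℝ) (1 / lam 0) := eventually_mem_nhdsWithin
  constructor
  · have h1 : Filter.Tendsto (fun δ : ℝ => C1 * (1 - δ * lam 0) / (cm 0)^2) l (nhds 0) := by
      have h := (hεt.const_mul C1).div_const ((cm 0)^2)
      simpa using h
    have hlow : Filter.Tendsto (fun δ : ℝ => 1 - C1 * (1 - δ * lam 0) / (cm 0)^2) l (nhds 1) := by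
      have h := (tendsto_const_nhds :
        Filter.Tendsto (fun _ : ℝ => (1:ℝ)) l (nhds 1)).sub h1
      simpa using h
    refine tendsto_of_tendsto_of_tendsto_of_le_of_le' hlow tendsto_const_nhds ?_ ?_
    · filter_upwards [hev] with δ hδ
      exact ((main δ hδ).1).1
    · filter_upwards [hev] with δ hδ
      exact ((main δ hδ).1).2
  · have h1 : Filter.Tendsto (fun δ : ℝ => C1 * (1 - δ * lam 0)) l (nhds 0) := by
      simpa using hεt.const_mul C1
    have h2 : Filter.Tendsto (fun δ : ℝ => Real.sqrt (C1 * (1 - δ * lam 0))) l (nhds 0) := by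
      have h := (Real.continuous_sqrt.tendsto 0).comp h1
      simpa [Real.sqrt_zero, Function.comp_def] using h
    have h3 : Filter.Tendsto (fun δ : ℝ => (1 - δ * lam 0)^2) l (nhds 0) := by
      simpa using hεt.pow 2
    have hφt : Filter.Tendsto (fun δ : ℝ =>
        (C1 * (1 - δ * lam 0) + 2 * cm 0 * Real.sqrt (C1 * (1 - δ * lam 0))
          + C3 * (1 - δ * lam 0)^2) / (cm 0)^2) l (nhds 0) := by
      have h4 := ((h1.add (h2.const_mul (2 * cm 0))).add (h3.const_mul C3)).div_const ((cm 0)^2)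
      have e : ∀ δ : ℝ, C1 * (1 - δ * lam 0) + 2 * cm 0 * Real.sqrt (C1 * (1 - δ * lam 0))
          + C3 * (1 - δ * lam 0)^2
          = C1 * (1 - δ * lam 0) + 2 * cm 0 * Real.sqrt (C1 * (1 - δ * lam 0))
            + C3 * (1 - δ * lam 0)^2 := fun _ => rfl
      simpa using h4
    have hhi : Filter.Tendsto (fun δ : ℝ => 1 +
        (C1 * (1 - δ * lam 0) + 2 * cm 0 * Real.sqrt (C1 * (1 - δ * lam 0))
          + C3 * (1 - δ * lam 0)^2) / (cm 0)^2) l (nhds 1) := by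
      have h := (tendsto_const_nhds :
        Filter.Tendsto (fun _ : ℝ => (1:ℝ)) l (nhds 1)).add hφt
      simpa using h
    have hlo : Filter.Tendsto (fun δ : ℝ => 1 -
        (C1 * (1 - δ * lam 0) + 2 * cm 0 * Real.sqrt (C1 * (1 - δ * lam 0))
          + C3 * (1 - δ * lam 0)^2) / (cm 0)^2) l (nhds 1) := by
      have h := (tendsto_const_nhds :
        Filter.Tendsto (fun _ : ℝ => (1:ℝ)) l (nhds 1)).sub hφt
      simpa using h
    refine tendsto_of_tendsto_of_tendsto_of_le_of_le' hlo hhi ?_ ?_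
    · filter_upwards [hev] with δ hδ
      have h := abs_le.mp (main δ hδ).2
      linarith [h.1]
    · filter_upwards [hev] with δ hδ
      have h := abs_le.mp (main δ hδ).2
      linarith [h.2]
end

section
/- Assume additionally that a is not proportional to 𝟙 and that G is non-regular. (i) If ⟨ψ, a⟩ > 0, then there exists δ̄ ∈ [0, 1/λ₁) such that for every δ ∈ (δ̄, 1/λ₁): V(p⁰(δ), δ) > V(p^ur, δ) and Π(p⁰(δ), δ) < Π(p^ur, δ), i.e., banning price discrimination harms the firm but benefits consumers. (ii) If ⟨ψ, a⟩ < 0, then there exists δ̿ ∈ [0, 1/λ₁) such that for every δ ∈ (δ̿, 1/λ₁): V(p⁰(δ), δ) < V(p^ur, δ) and Π(p⁰(δ), δ) < Π(p^ur, δ), i.e., banning price discrimination harms both the firm and consumers. -/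
open Matrix Topology Filter

/-- The network statistic ψ. -/
noncomputable def psiVec {n : ℕ} [NeZero n] (w : Fin n → Fin n → ℝ)
    (lam : Fin n → ℝ) : Fin n → ℝ :=
  (∑ i ∈ Finset.univ.erase (0 : Fin n),
      (w i ⬝ᵥ onesVec n) ^ 2 / (1 - lam i / lam 0)) • w 0 -
    ∑ i ∈ Finset.univ.erase (0 : Fin n),
      ((w i ⬝ᵥ onesVec n) * (w 0 ⬝ᵥ onesVec n) / (1 - lam i / lam 0)) • w i

/-- The optimal uniform price p⁰(δ) (with c = 0). -/
noncomputable def p0fn {n : ℕ} (G : Matrix (Fin n) (Fin n) ℝ) (δ : ℝ)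
    (a : Fin n → ℝ) : Fin n → ℝ :=
  ((onesVec n ⬝ᵥ (Hmat G δ *ᵥ pUR a 0)) /
      (onesVec n ⬝ᵥ (Hmat G δ *ᵥ onesVec n))) • onesVec n



lemma aux_dot_sum {n : ℕ} (u : Fin n → ℝ) (c : Fin n → ℝ) (w : Fin n → Fin n → ℝ) :
    u ⬝ᵥ (∑ i, c i • w i) = ∑ i, c i * (u ⬝ᵥ w i) := by
  simp only [dotProduct, Finset.sum_apply, Pi.smul_apply, smul_eq_mul, Finset.mul_sum]
  rw [Finset.sum_comm]
  exact Finset.sum_congr rfl fun i _ => Finset.sum_congr rfl fun k _ => by ring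

lemma aux_mulVec_sum {n : ℕ} (M : Matrix (Fin n) (Fin n) ℝ) (c : Fin n → ℝ)
    (w : Fin n → Fin n → ℝ) :
    M *ᵥ (∑ i, c i • w i) = ∑ i, c i • (M *ᵥ w i) := by
  ext k
  simp only [Matrix.mulVec, dotProduct, Finset.sum_apply, Pi.smul_apply, smul_eq_mul,
    Finset.mul_sum]
  rw [Finset.sum_comm]
  exact Finset.sum_congr rfl fun i _ => Finset.sum_congr rfl fun j _ => by ring

lemma aux_parseval {n : ℕ} (w : Fin n → Fin n → ℝ)
    (horth : ∀ i j, w i ⬝ᵥ w j = if i = j then (1 : ℝ) else 0) (v : Fin n → ℝ) :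
    ∑ i, (w i ⬝ᵥ v) • w i = v := by
  set W : Matrix (Fin n) (Fin n) ℝ := Matrix.of w with hW
  have h1 : W * Wᵀ = 1 := by
    ext i j
    simpa [Matrix.mul_apply, Matrix.one_apply, dotProduct, hW] using horth i j
  have h2 : Wᵀ * W = 1 := mul_eq_one_comm.mp h1
  have h3 : Wᵀ *ᵥ (W *ᵥ v) = v := by rw [Matrix.mulVec_mulVec, h2, Matrix.one_mulVec]
  have h4 : ∑ i, (w i ⬝ᵥ v) • w i = Wᵀ *ᵥ (W *ᵥ v) := by
    ext k
    simp only [Finset.sum_apply, Pi.smul_apply, smul_eq_mul, Matrix.mulVec, dotProduct,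
      Matrix.transpose_apply, Matrix.of_apply, hW]
    exact Finset.sum_congr rfl fun i _ => mul_comm _ _
  rw [h4, h3]

lemma aux_ortho_dot {n : ℕ} (w : Fin n → Fin n → ℝ)
    (horth : ∀ i j, w i ⬝ᵥ w j = if i = j then (1 : ℝ) else 0) (c : Fin n → ℝ) (j : Fin n) :
    w j ⬝ᵥ (∑ i, c i • w i) = c j := by
  rw [aux_dot_sum]
  simp [horth]

lemma aux_Mw {n : ℕ} (G : Matrix (Fin n) (Fin n) ℝ)
    (w : Fin n → Fin n → ℝ) (lam : Fin n → ℝ)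
    (heig : ∀ i, G *ᵥ w i = lam i • w i) (δ : ℝ) (i : Fin n) :
    (1 - δ • G) *ᵥ w i = (1 - δ * lam i) • w i := by
  rw [Matrix.sub_mulVec, Matrix.one_mulVec, Matrix.smul_mulVec, heig i]
  ext k
  simp [smul_smul, sub_smul]
  ring

lemma aux_Munit {n : ℕ} (G : Matrix (Fin n) (Fin n) ℝ)
    (w : Fin n → Fin n → ℝ) (lam : Fin n → ℝ)
    (horth : ∀ i j, w i ⬝ᵥ w j = if i = j then (1 : ℝ) else 0)
    (heig : ∀ i, G *ᵥ w i = lam i • w i) (hGsym : G.IsSymm) (δ : ℝ)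
    (hpos : ∀ i, 0 < 1 - δ * lam i) :
    IsUnit (1 - δ • G) := by
  rw [← Matrix.mulVec_injective_iff_isUnit]
  intro x y hxy
  have hz : (1 - δ • G) *ᵥ (x - y) = 0 := by
    rw [Matrix.mulVec_sub, hxy, sub_self]
  have hcoef : ∀ j, w j ⬝ᵥ (x - y) = 0 := by
    intro j
    have h1 : w j ⬝ᵥ ((1 - δ • G) *ᵥ (x - y)) = 0 := by rw [hz]; simp
    have hsymm : (1 - δ • G)ᵀ = 1 - δ • G := by
      simp [Matrix.transpose_sub, Matrix.transpose_smul, hGsym.eq]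
    rw [Matrix.dotProduct_mulVec, ← Matrix.mulVec_transpose, hsymm, aux_Mw G w lam heig δ j] at h1
    have := h1
    rw [smul_dotProduct] at this
    have hne := (hpos j).ne'
    simpa [smul_eq_mul, hne] using this
  have hxy0 : x - y = 0 := by
    rw [← aux_parseval w horth (x - y)]
    simp [hcoef]
  exact sub_eq_zero.mp hxy0

lemma aux_Hvec {n : ℕ} (G : Matrix (Fin n) (Fin n) ℝ)
    (w : Fin n → Fin n → ℝ) (lam : Fin n → ℝ)
    (horth : ∀ i j, w i ⬝ᵥ w j = if i = j then (1 : ℝ) else 0)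
    (heig : ∀ i, G *ᵥ w i = lam i • w i) (hGsym : G.IsSymm) (δ : ℝ)
    (hpos : ∀ i, 0 < 1 - δ * lam i) (i : Fin n) :
    Hmat G δ *ᵥ w i = (1 - δ * lam i)⁻¹ • w i := by
  have hunit := aux_Munit G w lam horth heig hGsym δ hpos
  have hdet : IsUnit (1 - δ • G).det := (Matrix.isUnit_iff_isUnit_det _).mp hunit
  have h1 : (1 - δ • G) *ᵥ ((1 - δ * lam i)⁻¹ • w i) = w i := by
    rw [Matrix.mulVec_smul, aux_Mw G w lam heig δ i, smul_smul,
      inv_mul_cancel₀ (hpos i).ne', one_smul]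
  calc Hmat G δ *ᵥ w i
      = (1 - δ • G)⁻¹ *ᵥ ((1 - δ • G) *ᵥ ((1 - δ * lam i)⁻¹ • w i)) := by
        rw [h1]; rfl
    _ = ((1 - δ • G)⁻¹ * (1 - δ • G)) *ᵥ ((1 - δ * lam i)⁻¹ • w i) :=
        Matrix.mulVec_mulVec _ _ _
    _ = (1 - δ * lam i)⁻¹ • w i := by
        rw [Matrix.nonsing_inv_mul _ hdet, Matrix.one_mulVec]

lemma aux_quadform {n : ℕ} (G : Matrix (Fin n) (Fin n) ℝ)
    (w : Fin n → Fin n → ℝ) (lam : Fin n → ℝ)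
    (horth : ∀ i j, w i ⬝ᵥ w j = if i = j then (1 : ℝ) else 0)
    (heig : ∀ i, G *ᵥ w i = lam i • w i) (hGsym : G.IsSymm) (δ : ℝ)
    (hpos : ∀ i, 0 < 1 - δ * lam i) (u v : Fin n → ℝ) :
    u ⬝ᵥ (Hmat G δ *ᵥ v) = ∑ i, (1 - δ * lam i)⁻¹ * ((w i ⬝ᵥ u) * (w i ⬝ᵥ v)) := by
  conv_lhs => rw [← aux_parseval w horth v]
  rw [aux_mulVec_sum]
  have h : ∀ i : Fin n, (w i ⬝ᵥ v) • (Hmat G δ *ᵥ w i)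
      = ((w i ⬝ᵥ v) * (1 - δ * lam i)⁻¹) • w i := by
    intro i
    rw [aux_Hvec G w lam horth heig hGsym δ hpos i, smul_smul]
  rw [Finset.sum_congr rfl (fun i _ => h i), aux_dot_sum]
  exact Finset.sum_congr rfl fun i _ => by rw [dotProduct_comm u (w i)]; ring

lemma aux_coord_H {n : ℕ} (G : Matrix (Fin n) (Fin n) ℝ)
    (w : Fin n → Fin n → ℝ) (lam : Fin n → ℝ)
    (horth : ∀ i j, w i ⬝ᵥ w j = if i = j then (1 : ℝ) else 0)
    (heig : ∀ i, G *ᵥ w i = lam i • w i) (hGsym : G.IsSymm) (δ : ℝ)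
    (hpos : ∀ i, 0 < 1 - δ * lam i) (v : Fin n → ℝ) (i : Fin n) :
    w i ⬝ᵥ (Hmat G δ *ᵥ v) = (1 - δ * lam i)⁻¹ * (w i ⬝ᵥ v) := by
  rw [aux_quadform G w lam horth heig hGsym δ hpos (w i) v]
  simp [horth]

lemma aux_quadform2 {n : ℕ} (G : Matrix (Fin n) (Fin n) ℝ)
    (w : Fin n → Fin n → ℝ) (lam : Fin n → ℝ)
    (horth : ∀ i j, w i ⬝ᵥ w j = if i = j then (1 : ℝ) else 0)
    (heig : ∀ i, G *ᵥ w i = lam i • w i) (hGsym : G.IsSymm) (δ : ℝ)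
    (hpos : ∀ i, 0 < 1 - δ * lam i) (u v : Fin n → ℝ) :
    u ⬝ᵥ ((Hmat G δ * Hmat G δ) *ᵥ v)
      = ∑ i, ((1 - δ * lam i)⁻¹)^2 * ((w i ⬝ᵥ u) * (w i ⬝ᵥ v)) := by
  rw [← Matrix.mulVec_mulVec, aux_quadform G w lam horth heig hGsym δ hpos u (Hmat G δ *ᵥ v)]
  refine Finset.sum_congr rfl fun i _ => ?_
  rw [aux_coord_H G w lam horth heig hGsym δ hpos v i]
  ring

lemma aux_sum_dotProduct {n : ℕ} (s : Finset (Fin n)) (f : Fin n → Fin n → ℝ)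
    (a : Fin n → ℝ) : (∑ i ∈ s, f i) ⬝ᵥ a = ∑ i ∈ s, (f i ⬝ᵥ a) := by
  simp only [dotProduct, Finset.sum_apply, Finset.sum_mul]
  exact Finset.sum_comm


theorem stmt14 {n : ℕ} [NeZero n]
    (G : Matrix (Fin n) (Fin n) ℝ) (hGsym : G.IsSymm)
    (hGnn : ∀ i j, 0 ≤ G i j) (hGdiag : ∀ i, G i i = 0)
    (w : Fin n → Fin n → ℝ) (lam : Fin n → ℝ)
    (horth : ∀ i j, w i ⬝ᵥ w j = if i = j then (1 : ℝ) else 0)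
    (heig : ∀ i, G *ᵥ w i = lam i • w i)
    (hgap : ∀ i, i ≠ 0 → lam i < lam 0)
    (hlam0 : 0 < lam 0)
    (hw0 : ∀ k, 0 < w 0 k)
    (hpd : ∀ δ ∈ Set.Ico (0 : ℝ) (1 / lam 0), (Hmat G δ).PosDef)
    (a : Fin n → ℝ) (ha : ∀ i, 0 < a i)
    (haprop : ¬ ∃ t : ℝ, a = t • onesVec n)
    (hnonreg : ∃ i : Fin n, i ≠ 0 ∧ w i ⬝ᵥ onesVec n ≠ 0) :
    (psiVec w lam ⬝ᵥ a > 0 →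
      ∃ δbar ∈ Set.Ico (0 : ℝ) (1 / lam 0),
        ∀ δ ∈ Set.Ioo δbar (1 / lam 0),
          surplus G δ a (pUR a 0) < surplus G δ a (p0fn G δ a) ∧
          profit G δ a 0 (p0fn G δ a) < profit G δ a 0 (pUR a 0)) ∧
    (psiVec w lam ⬝ᵥ a < 0 →
      ∃ δbbar ∈ Set.Ico (0 : ℝ) (1 / lam 0),
        ∀ δ ∈ Set.Ioo δbbar (1 / lam 0),
          surplus G δ a (p0fn G δ a) < surplus G δ a (pUR a 0) ∧
          profit G δ a 0 (p0fn G δ a) < profit G δ a 0 (pUR a 0)) := by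
  classical
  have hnE : Nonempty (Fin n) := ⟨0⟩
  set T : ℝ := 1 / lam 0 with hT
  have hTpos : 0 < T := div_pos one_pos hlam0
  have hlamle : ∀ i, lam i ≤ lam 0 := by
    intro i
    by_cases h : i = 0
    · rw [h]
    · exact (hgap i h).le
  have hpos : ∀ δ ∈ Set.Ico (0:ℝ) T, ∀ i, 0 < 1 - δ * lam i := by
    intro δ hδ i
    have h1 : δ * lam i ≤ δ * lam 0 := mul_le_mul_of_nonneg_left (hlamle i) hδ.1
    have h2 : δ * lam 0 < 1 := (lt_div_iff₀ hlam0).mp hδ.2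
    linarith
  -- scalar data
  set B : Fin n → ℝ := fun i => w i ⬝ᵥ onesVec n with hB
  set Av : Fin n → ℝ := fun i => w i ⬝ᵥ a with hAv
  set m : Fin n → ℝ → ℝ := fun i δ => (1 - δ * lam i)⁻¹ with hm
  set Nf : ℝ → ℝ := fun δ => ∑ i, m i δ * (B i * (Av i / 2)) with hNf
  set Df : ℝ → ℝ := fun δ => ∑ i, m i δ * (B i * B i) with hDf
  set q : ℝ → ℝ := fun δ => Nf δ / Df δ with hq
  set s : ℝ → ℝ := fun δ => 1 - δ * lam 0 with hs
  set X : ℝ → ℝ := fun δ => ∑ i ∈ Finset.univ.erase (0 : Fin n),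
      m i δ * (B i * (Av i / 2)) with hX
  set Y : ℝ → ℝ := fun δ => ∑ i ∈ Finset.univ.erase (0 : Fin n),
      m i δ * (B i * B i) with hY
  set Dsur : ℝ → ℝ := fun δ => (1/2) * ∑ i,
      (m i δ)^2 * ((Av i - q δ * B i)^2 - (Av i / 2)^2) with hDsur
  have hA0 : 0 < Av 0 := by
    rw [hAv]
    exact Finset.sum_pos (fun k _ => mul_pos (hw0 k) (ha k)) Finset.univ_nonempty
  have hB0 : 0 < B 0 := by
    rw [hB]
    simpa [dotProduct, onesVec] using
      Finset.sum_pos (fun k (_ : k ∈ Finset.univ) => hw0 k) Finset.univ_nonempty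
  -- half vectors
  have hpUR : pUR a (0 : Fin n → ℝ) = (1/2 : ℝ) • a := by
    funext k; simp [pUR]
  have hhalf : ∀ i, w i ⬝ᵥ ((1/2 : ℝ) • a) = Av i / 2 := by
    intro i
    rw [dotProduct_smul]
    simp only [hAv, smul_eq_mul]
    ring
  -- basic positivity on Ico
  have hmpos : ∀ δ ∈ Set.Ico (0:ℝ) T, ∀ i, 0 < m i δ := by
    intro δ hδ i
    exact inv_pos.mpr (hpos δ hδ i)
  have hDfpos : ∀ δ ∈ Set.Ico (0:ℝ) T, 0 < Df δ := by
    intro δ hδ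
    rw [hDf]
    refine Finset.sum_pos' (fun i _ => ?_) ⟨0, Finset.mem_univ 0, ?_⟩
    · exact mul_nonneg (hmpos δ hδ i).le (mul_self_nonneg _)
    · exact mul_pos (hmpos δ hδ 0) (mul_pos hB0 hB0)
  -- p0fn is q δ • 𝟙
  have hp0 : ∀ δ ∈ Set.Ico (0:ℝ) T, p0fn G δ a = q δ • onesVec n := by
    intro δ hδ
    have h1 : onesVec n ⬝ᵥ (Hmat G δ *ᵥ pUR a 0) = Nf δ := by
      rw [hpUR, aux_quadform G w lam horth heig hGsym δ (hpos δ hδ)]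
      exact Finset.sum_congr rfl fun i _ => by rw [hhalf i]
    have h2 : onesVec n ⬝ᵥ (Hmat G δ *ᵥ onesVec n) = Df δ := by
      rw [aux_quadform G w lam horth heig hGsym δ (hpos δ hδ)]
    rw [p0fn, h1, h2, hq]
  -- coordinates of a - p0fn and a - pUR
  have hcoord_p0 : ∀ δ, ∀ i, w i ⬝ᵥ (a - q δ • onesVec n) = Av i - q δ * B i := by
    intro δ i
    rw [dotProduct_sub, dotProduct_smul]
    simp [hAv, hB, smul_eq_mul]
  have hcoord_ur : ∀ i, w i ⬝ᵥ (a - pUR a 0) = Av i / 2 := by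
    intro i
    have : a - pUR a 0 = (1/2 : ℝ) • a := by
      funext k; simp [pUR]; ring
    rw [this, hhalf]
  -- surplus difference
  have hsurlink : ∀ δ ∈ Set.Ico (0:ℝ) T,
      surplus G δ a (p0fn G δ a) - surplus G δ a (pUR a 0) = Dsur δ := by
    intro δ hδ
    rw [hp0 δ hδ]
    rw [surplus, surplus,
      aux_quadform2 G w lam horth heig hGsym δ (hpos δ hδ),
      aux_quadform2 G w lam horth heig hGsym δ (hpos δ hδ),
      hDsur]
    rw [← mul_sub, ← Finset.sum_sub_distrib]
    congr 1
    refine Finset.sum_congr rfl fun i _ => ?_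
    rw [hcoord_p0 δ i, hcoord_ur i]
    ring
  -- profit comparison on Ico
  have hprofit : ∀ δ ∈ Set.Ico (0:ℝ) T,
      profit G δ a 0 (p0fn G δ a) < profit G δ a 0 (pUR a 0) := by
    intro δ hδ
    have hP1 : profit G δ a 0 (p0fn G δ a)
        = ∑ i, m i δ * ((q δ * B i) * (Av i - q δ * B i)) := by
      rw [hp0 δ hδ, profit, sub_zero, aux_quadform G w lam horth heig hGsym δ (hpos δ hδ)]
      refine Finset.sum_congr rfl fun i _ => ?_
      rw [hcoord_p0 δ i, dotProduct_smul]
      simp only [hB, smul_eq_mul]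
      rfl
    have hP2 : profit G δ a 0 (pUR a 0)
        = ∑ i, m i δ * ((Av i / 2) * (Av i / 2)) := by
      rw [profit, sub_zero, aux_quadform G w lam horth heig hGsym δ (hpos δ hδ)]
      refine Finset.sum_congr rfl fun i _ => ?_
      rw [hcoord_ur i, hpUR, hhalf i]
    have hdiff : profit G δ a 0 (pUR a 0) - profit G δ a 0 (p0fn G δ a)
        = ∑ i, m i δ * (Av i / 2 - q δ * B i)^2 := by
      rw [hP1, hP2, ← Finset.sum_sub_distrib]
      exact Finset.sum_congr rfl fun i _ => by ring
    have hnz : ∃ j, Av j / 2 - q δ * B j ≠ 0 := by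
      by_contra h
      push_neg at h
      apply haprop
      refine ⟨2 * q δ, ?_⟩
      have hv : (1/2:ℝ) • a - q δ • onesVec n = 0 := by
        rw [← aux_parseval w horth ((1/2:ℝ) • a - q δ • onesVec n)]
        refine Finset.sum_eq_zero fun j _ => ?_
        have hc : w j ⬝ᵥ ((1/2:ℝ) • a - q δ • onesVec n) = Av j / 2 - q δ * B j := by
          rw [dotProduct_sub, hhalf, dotProduct_smul]
          simp only [hB, smul_eq_mul]
        rw [hc, h j, zero_smul]
      funext k
      have hk := congrFun hv k
      simp only [Pi.sub_apply, Pi.smul_apply, Pi.zero_apply, smul_eq_mul, onesVec] at hk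
      simp only [Pi.smul_apply, smul_eq_mul, onesVec]
      linarith
    obtain ⟨j, hj⟩ := hnz
    have hjpos : 0 < (Av j / 2 - q δ * B j)^2 := by positivity
    have hsumpos : 0 < ∑ i, m i δ * (Av i / 2 - q δ * B i)^2 :=
      Finset.sum_pos' (fun i _ => mul_nonneg (hmpos δ hδ i).le (sq_nonneg _))
        ⟨j, Finset.mem_univ j, mul_pos (hmpos δ hδ j) hjpos⟩
    linarith [hdiff]
  -- ================== analytic part ==================
  set l : Filter ℝ := nhdsWithin T (Set.Iio T) with hl
  set nu : Fin n → ℝ := fun i => (1 - lam i / lam 0)⁻¹ with hnu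
  have hnud : ∀ i, i ≠ 0 → 0 < 1 - lam i / lam 0 := by
    intro i hi
    have := (div_lt_one hlam0).mpr (hgap i hi)
    linarith
  have hspos' : ∀ δ ∈ Set.Iio T, 0 < s δ := by
    intro δ hδ
    have h2 : δ * lam 0 < 1 := (lt_div_iff₀ hlam0).mp hδ
    simp only [hs]
    linarith
  have hm0s : ∀ δ, m 0 δ = (s δ)⁻¹ := by
    intro δ
    simp only [hm, hs]
  have hmt : ∀ i, i ≠ 0 → Filter.Tendsto (fun δ => m i δ) l (𝓝 (nu i)) := by
    intro i hi
    have hc : Filter.Tendsto (fun δ : ℝ => 1 - δ * lam i) (𝓝 T) (𝓝 (1 - T * lam i)) :=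
      (continuous_const.sub (continuous_id.mul continuous_const)).tendsto T
    have hvt : 1 - T * lam i = 1 - lam i / lam 0 := by rw [hT]; ring
    rw [hvt] at hc
    have h2 := (hc.inv₀ (hnud i hi).ne').mono_left
      (nhdsWithin_le_nhds (s := Set.Iio T))
    rw [hl]
    simp only [hm, hnu]
    exact h2
  have hst : Filter.Tendsto s l (𝓝 0) := by
    have hc : Filter.Tendsto (fun δ : ℝ => 1 - δ * lam 0) (𝓝 T) (𝓝 (1 - T * lam 0)) :=
      (continuous_const.sub (continuous_id.mul continuous_const)).tendsto T
    have hvt : 1 - T * lam 0 = 0 := by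
      rw [hT]
      field_simp
      ring
    rw [hvt] at hc
    rw [hl]
    simp only [hs]
    exact hc.mono_left (nhdsWithin_le_nhds (s := Set.Iio T))
  set Xs : ℝ := ∑ i ∈ Finset.univ.erase (0 : Fin n), nu i * (B i * (Av i / 2)) with hXs
  set Ys : ℝ := ∑ i ∈ Finset.univ.erase (0 : Fin n), nu i * (B i * B i) with hYs
  have hXt : Filter.Tendsto X l (𝓝 Xs) := by
    simp only [hX, hXs]
    exact tendsto_finset_sum _ fun i hi =>
      (hmt i (Finset.mem_erase.mp hi).1).mul_const _
  have hYt : Filter.Tendsto Y l (𝓝 Ys) := by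
    simp only [hY, hYs]
    exact tendsto_finset_sum _ fun i hi =>
      (hmt i (Finset.mem_erase.mp hi).1).mul_const _
  have hsplitN : ∀ δ, Nf δ = X δ + m 0 δ * (B 0 * (Av 0 / 2)) := by
    intro δ
    simp only [hNf, hX]
    exact (Finset.sum_erase_add _ _ (Finset.mem_univ 0)).symm
  have hsplitD : ∀ δ, Df δ = Y δ + m 0 δ * (B 0 * B 0) := by
    intro δ
    simp only [hDf, hY]
    exact (Finset.sum_erase_add _ _ (Finset.mem_univ 0)).symm
  have hsm : ∀ δ ∈ Set.Iio T, s δ * m 0 δ = 1 := by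
    intro δ hδ
    rw [hm0s δ]
    exact mul_inv_cancel₀ (hspos' δ hδ).ne'
  have hIioMem : Set.Iio T ∈ l := self_mem_nhdsWithin
  have hIooMem : Set.Ioo (0:ℝ) T ∈ l := Ioo_mem_nhdsLT hTpos
  have hsNft : Filter.Tendsto (fun δ => s δ * Nf δ) l (𝓝 (B 0 * (Av 0 / 2))) := by
    have heq : ∀ δ ∈ Set.Iio T, s δ * X δ + B 0 * (Av 0 / 2) = s δ * Nf δ := by
      intro δ hδ
      rw [hsplitN δ, mul_add, ← mul_assoc, hsm δ hδ, one_mul]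
    have h1 : Filter.Tendsto (fun δ => s δ * X δ + B 0 * (Av 0 / 2)) l
        (𝓝 (0 * Xs + B 0 * (Av 0 / 2))) := (hst.mul hXt).add tendsto_const_nhds
    rw [zero_mul, zero_add] at h1
    exact h1.congr' (Filter.eventuallyEq_of_mem hIioMem heq)
  have hsDft : Filter.Tendsto (fun δ => s δ * Df δ) l (𝓝 (B 0 * B 0)) := by
    have heq : ∀ δ ∈ Set.Iio T, s δ * Y δ + B 0 * B 0 = s δ * Df δ := by
      intro δ hδ
      rw [hsplitD δ, mul_add, ← mul_assoc, hsm δ hδ, one_mul]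
    have h1 : Filter.Tendsto (fun δ => s δ * Y δ + B 0 * B 0) l
        (𝓝 (0 * Ys + B 0 * B 0)) := (hst.mul hYt).add tendsto_const_nhds
    rw [zero_mul, zero_add] at h1
    exact h1.congr' (Filter.eventuallyEq_of_mem hIioMem heq)
  have hB0sq : (0:ℝ) < B 0 * B 0 := mul_pos hB0 hB0
  have hqt : Filter.Tendsto q l (𝓝 (Av 0 / (2 * B 0))) := by
    have h1 := hsNft.div hsDft hB0sq.ne'
    have hval : B 0 * (Av 0 / 2) / (B 0 * B 0) = Av 0 / (2 * B 0) := by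
      field_simp
    rw [hval] at h1
    have heq : ∀ δ ∈ Set.Ioo (0:ℝ) T, s δ * Nf δ / (s δ * Df δ) = q δ := by
      intro δ hδ
      rw [mul_div_mul_left _ _ (hspos' δ hδ.2).ne']
    exact h1.congr' (Filter.eventuallyEq_of_mem hIooMem heq)
  set Es : ℝ := Av 0 / 2 * Ys - B 0 * Xs with hEs
  set C : ℝ := (1/2) * (Es / (B 0 * B 0)) * Av 0 with hC
  have hkey : ∀ δ ∈ Set.Ioo (0:ℝ) T, s δ * Dsur δ
      = (1/2) * (s δ * (∑ i ∈ Finset.univ.erase (0 : Fin n),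
          (m i δ)^2 * ((Av i - q δ * B i)^2 - (Av i / 2)^2)))
        + (1/2) * ((Av 0 / 2 * Y δ - B 0 * X δ) / (s δ * Df δ))
          * (3 * Av 0 / 2 - q δ * B 0) := by
    intro δ hδ
    have hIco : δ ∈ Set.Ico (0:ℝ) T := ⟨hδ.1.le, hδ.2⟩
    have hsne : s δ ≠ 0 := (hspos' δ hδ.2).ne'
    have hDfne : Df δ ≠ 0 := (hDfpos δ hIco).ne'
    have hqd : q δ * Df δ = Nf δ := div_mul_cancel₀ _ hDfne
    have hnum : Av 0 / 2 * Df δ - B 0 * Nf δ = Av 0 / 2 * Y δ - B 0 * X δ := by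
      rw [hsplitN δ, hsplitD δ]; ring
    have hc1 : m 0 δ * (Av 0 / 2 - q δ * B 0)
        = (Av 0 / 2 * Y δ - B 0 * X δ) / (s δ * Df δ) := by
      rw [← hnum, hm0s δ, eq_div_iff (mul_ne_zero hsne hDfne)]
      have h1 : (s δ)⁻¹ * (Av 0 / 2 - q δ * B 0) * (s δ * Df δ)
          = Av 0 / 2 * Df δ - B 0 * (q δ * Df δ) := by
        field_simp
      rw [h1, hqd]
    have hsmm : s δ * (m 0 δ)^2 = m 0 δ := by
      rw [hm0s δ]
      field_simp
    have hfac : s δ * ((m 0 δ)^2 * ((Av 0 - q δ * B 0)^2 - (Av 0 / 2)^2))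
        = (m 0 δ * (Av 0 / 2 - q δ * B 0)) * (3 * Av 0 / 2 - q δ * B 0) := by
      linear_combination ((Av 0 - q δ * B 0)^2 - (Av 0 / 2)^2) * hsmm
    simp only [hDsur]
    rw [← Finset.sum_erase_add _ _ (Finset.mem_univ (0 : Fin n))]
    rw [← hc1]
    linear_combination (1/2 : ℝ) * hfac
  have hF1 : Filter.Tendsto (fun δ => (1/2) * (s δ * (∑ i ∈ Finset.univ.erase (0:Fin n),
      (m i δ)^2 * ((Av i - q δ * B i)^2 - (Av i / 2)^2)))) l (𝓝 0) := by
    have hsum : Filter.Tendsto (fun δ => ∑ i ∈ Finset.univ.erase (0:Fin n),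
        (m i δ)^2 * ((Av i - q δ * B i)^2 - (Av i / 2)^2)) l
        (𝓝 (∑ i ∈ Finset.univ.erase (0:Fin n),
        (nu i)^2 * ((Av i - (Av 0/(2*B 0)) * B i)^2 - (Av i / 2)^2))) := by
      refine tendsto_finset_sum _ fun i hi => ?_
      have h1 := (hmt i (Finset.mem_erase.mp hi).1).pow 2
      have h2 : Filter.Tendsto (fun δ => (Av i - q δ * B i)^2 - (Av i/2)^2) l
          (𝓝 ((Av i - (Av 0/(2*B 0)) * B i)^2 - (Av i/2)^2)) :=
        ((tendsto_const_nhds.sub (hqt.mul_const _)).pow 2).sub tendsto_const_nhds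
      exact h1.mul h2
    have h3 := (hst.mul hsum).const_mul (1/2 : ℝ)
    simpa using h3
  have hF2 : Filter.Tendsto (fun δ => (1/2) * ((Av 0/2 * Y δ - B 0 * X δ) / (s δ * Df δ))
      * (3 * Av 0 / 2 - q δ * B 0)) l (𝓝 C) := by
    have hnum : Filter.Tendsto (fun δ => Av 0/2 * Y δ - B 0 * X δ) l (𝓝 Es) := by
      rw [hEs]
      exact (hYt.const_mul _).sub (hXt.const_mul _)
    have hfrac := hnum.div hsDft hB0sq.ne'
    have hlast : Filter.Tendsto (fun δ => 3 * Av 0 / 2 - q δ * B 0) l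
        (𝓝 (3 * Av 0 / 2 - (Av 0/(2*B 0)) * B 0)) := tendsto_const_nhds.sub (hqt.mul_const _)
    have h3 := (hfrac.const_mul (1/2:ℝ)).mul hlast
    have hval : (1/2) * (Es/(B 0 * B 0)) * (3 * Av 0/2 - Av 0/(2*B 0) * B 0) = C := by
      rw [hC]
      field_simp
      ring
    rw [hval] at h3
    exact h3
  have htot : Filter.Tendsto (fun δ => s δ * Dsur δ) l (𝓝 C) := by
    have h1 := hF1.add hF2
    rw [zero_add] at h1
    exact h1.congr' (Filter.eventuallyEq_of_mem hIooMem fun δ hδ => (hkey δ hδ).symm)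
  have hpsi2 : psiVec w lam ⬝ᵥ a = 2 * Es := by
    rw [hEs, hXs, hYs]
    simp only [psiVec, sub_dotProduct, smul_dotProduct, aux_sum_dotProduct, smul_eq_mul,
      hB, hAv, hnu]
    rw [Finset.sum_mul, Finset.mul_sum, Finset.mul_sum, ← Finset.sum_sub_distrib,
      ← Finset.sum_sub_distrib, Finset.mul_sum]
    refine Finset.sum_congr rfl fun i hi => ?_
    ring
  -- final extraction
  have hextract : ∀ P : ℝ → Prop, (∀ᶠ δ in l, P δ) →
      ∃ δbar ∈ Set.Ico (0:ℝ) T, ∀ δ ∈ Set.Ioo δbar T, P δ := by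
    intro P hP
    have hev := hP.and (hIooMem : ∀ᶠ δ in l, δ ∈ Set.Ioo (0:ℝ) T)
    rw [hl] at hev
    obtain ⟨δbar, hδbar, hsub⟩ :=
      (mem_nhdsLT_iff_exists_mem_Ico_Ioo_subset hTpos).mp hev
    exact ⟨δbar, hδbar, fun δ hδ => (hsub hδ).1⟩
  constructor
  · intro hψ
    have hEspos : 0 < Es := by linarith [hpsi2]
    have hCpos : 0 < C := by
      rw [hC]
      positivity
    have hev1 : ∀ᶠ δ in l, 0 < s δ * Dsur δ := htot.eventually (eventually_gt_nhds hCpos)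
    obtain ⟨δbar, hδbar, hgood⟩ := hextract _ (hev1.and hIooMem)
    refine ⟨δbar, hδbar, fun δ hδ => ?_⟩
    obtain ⟨h1, h2⟩ := hgood δ hδ
    have hIco : δ ∈ Set.Ico (0:ℝ) T := ⟨h2.1.le, h2.2⟩
    have hspos : 0 < s δ := hspos' δ h2.2
    have hDsurpos : 0 < Dsur δ := by
      rcases mul_pos_iff.mp h1 with ⟨_, h⟩ | ⟨h, _⟩
      · exact h
      · linarith
    have hlink := hsurlink δ hIco
    exact ⟨by linarith, hprofit δ hIco⟩
  · intro hψ
    have hEsneg : Es < 0 := by linarith [hpsi2]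
    have hCneg : C < 0 := by
      rw [hC]
      have h5 : Es / (B 0 * B 0) < 0 := div_neg_of_neg_of_pos hEsneg hB0sq
      have h6 : (1/2:ℝ) * (Es / (B 0 * B 0)) < 0 := by linarith
      exact mul_neg_of_neg_of_pos h6 hA0
    have hev1 : ∀ᶠ δ in l, s δ * Dsur δ < 0 := htot.eventually (eventually_lt_nhds hCneg)
    obtain ⟨δbar, hδbar, hgood⟩ := hextract _ (hev1.and hIooMem)
    refine ⟨δbar, hδbar, fun δ hδ => ?_⟩
    obtain ⟨h1, h2⟩ := hgood δ hδ
    have hIco : δ ∈ Set.Ico (0:ℝ) T := ⟨h2.1.le, h2.2⟩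
    have hspos : 0 < s δ := hspos' δ h2.2
    have hDsurneg : Dsur δ < 0 := by
      rcases mul_neg_iff.mp h1 with ⟨_, h⟩ | ⟨h, _⟩
      · exact h
      · linarith
    have hlink := hsurlink δ hIco
    exact ⟨by linarith, hprofit δ hIco⟩
end

section
/- Write z̃ := z − (⟨z, 𝟙⟩/n)·𝟙 for the demeaned version of a vector z ∈ ℝⁿ. Then: (i) ⟨ψ, 𝟙⟩ = 0; (ii) if G is non-regular then w̃₁ ≠ 0 and ⟨ψ, w̃₁⟩ > 0; (iii) if G is non-regular, there exists ε > 0 such that for every a ∈ ℝⁿ with ã ≠ 0: if ⟨ã, w̃₁⟩ > (1 − ε)·‖ã‖·‖w̃₁‖ then ⟨ψ, a⟩ > 0, and if ⟨ã, w̃₁⟩ < (−1 + ε)·‖ã‖·‖w̃₁‖ then ⟨ψ, a⟩ < 0. -/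
open Matrix

/-- The demeaned version z̃ = z − (⟨z, 𝟙⟩/n)·𝟙 of a vector z. -/
noncomputable def demean {n : ℕ} (z : Fin n → ℝ) : Fin n → ℝ :=
  z - ((z ⬝ᵥ onesVec n) / (n : ℝ)) • onesVec n

/-- Euclidean norm of a vector. -/
noncomputable def eNorm {n : ℕ} (z : Fin n → ℝ) : ℝ :=
  Real.sqrt (z ⬝ᵥ z)


open scoped RealInnerProductSpace

noncomputable def toE {n : ℕ} (x : Fin n → ℝ) : EuclideanSpace ℝ (Fin n) := WithLp.toLp 2 x

lemma dot_eq_inner {n : ℕ} (x y : Fin n → ℝ) :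
    x ⬝ᵥ y = ⟪toE x, toE y⟫ := by
  simp [dotProduct, PiLp.inner_apply, RCLike.inner_apply, toE, mul_comm]

lemma sqrt_dot_eq_norm {n : ℕ} (x : Fin n → ℝ) :
    Real.sqrt (x ⬝ᵥ x) = ‖toE x‖ := by
  rw [EuclideanSpace.norm_eq]
  congr 1
  simp [dotProduct, toE, sq_abs, sq]

lemma eNorm_eq {n : ℕ} (z : Fin n → ℝ) : eNorm z = ‖toE z‖ := sqrt_dot_eq_norm z

lemma sum_smul_dot {n : ℕ} (s : Finset (Fin n)) (c : Fin n → ℝ) (w : Fin n → Fin n → ℝ)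
    (z : Fin n → ℝ) : (∑ i ∈ s, c i • w i) ⬝ᵥ z = ∑ i ∈ s, c i * (w i ⬝ᵥ z) := by
  simp only [dotProduct, Finset.sum_apply, Pi.smul_apply, smul_eq_mul, Finset.sum_mul,
    Finset.mul_sum]
  rw [Finset.sum_comm]
  apply Finset.sum_congr rfl; intros; apply Finset.sum_congr rfl; intros; ring

lemma demean_neg {n : ℕ} (a : Fin n → ℝ) : demean (-a) = -demean a := by
  funext k
  simp [demean, onesVec, dotProduct, neg_div]
  ring

lemma eNorm_neg {n : ℕ} (a : Fin n → ℝ) : eNorm (-a) = eNorm a := by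
  unfold eNorm
  rw [neg_dotProduct, dotProduct_neg, neg_neg]

/-- Abstract geometric core: if `x` is sufficiently aligned with `u` and `⟪Ψ, u⟫ = S > 0`,
then `⟪Ψ, x⟫ > 0`. -/
lemma inner_pos_of_close {E : Type*} [NormedAddCommGroup E] [InnerProductSpace ℝ E]
    (Ψ u x : E) (S : ℝ) (hS : 0 < S) (hiS : ⟪Ψ, u⟫ = S)
    (hN : 0 < ‖u‖) (hX : 0 < ‖x‖)
    (h : (1 - S ^ 2 / (4 * ‖u‖ ^ 2 * ‖Ψ‖ ^ 2)) * (‖x‖ * ‖u‖) < ⟪x, u⟫) :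
    0 < ⟪Ψ, x⟫ := by
  have hCS : S ≤ ‖Ψ‖ * ‖u‖ := hiS ▸ real_inner_le_norm Ψ u
  have hP : 0 < ‖Ψ‖ := by
    rcases lt_or_ge 0 ‖Ψ‖ with h' | h'
    · exact h'
    · exfalso; nlinarith
  set ε : ℝ := S ^ 2 / (4 * ‖u‖ ^ 2 * ‖Ψ‖ ^ 2) with hεdef
  set v : E := ‖u‖ • x - ‖x‖ • u with hvdef
  have hvsq : ‖v‖ ^ 2 = 2 * ‖x‖ ^ 2 * ‖u‖ ^ 2 - 2 * (‖u‖ * ‖x‖) * ⟪x, u⟫ := by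
    rw [hvdef, norm_sub_sq_real, real_inner_smul_left, real_inner_smul_right,
      norm_smul, norm_smul, Real.norm_eq_abs, Real.norm_eq_abs,
      abs_of_nonneg (norm_nonneg u), abs_of_nonneg (norm_nonneg x)]
    ring
  have hvlt : ‖v‖ ^ 2 < 2 * ε * (‖x‖ ^ 2 * ‖u‖ ^ 2) := by
    rw [hvsq]
    nlinarith [mul_pos hN hX, h]
  have hXS : 0 < ‖x‖ * S := mul_pos hX hS
  have hPv : ‖Ψ‖ * ‖v‖ < ‖x‖ * S := by
    apply lt_of_pow_lt_pow_left₀ 2 (le_of_lt hXS)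
    have e2 : ‖Ψ‖ ^ 2 * (2 * ε * (‖x‖ ^ 2 * ‖u‖ ^ 2)) = ‖x‖ ^ 2 * S ^ 2 / 2 := by
      rw [hεdef]
      field_simp
      ring
    have e3 : ‖Ψ‖ ^ 2 * ‖v‖ ^ 2 < ‖Ψ‖ ^ 2 * (2 * ε * (‖x‖ ^ 2 * ‖u‖ ^ 2)) :=
      (mul_lt_mul_iff_right₀ (pow_pos hP 2)).mpr hvlt
    have e4 : ‖x‖ ^ 2 * S ^ 2 / 2 < (‖x‖ * S) ^ 2 := by nlinarith
    calc (‖Ψ‖ * ‖v‖) ^ 2 = ‖Ψ‖ ^ 2 * ‖v‖ ^ 2 := by ring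
      _ < ‖Ψ‖ ^ 2 * (2 * ε * (‖x‖ ^ 2 * ‖u‖ ^ 2)) := e3
      _ = ‖x‖ ^ 2 * S ^ 2 / 2 := e2
      _ < (‖x‖ * S) ^ 2 := e4
  have hiv : ⟪Ψ, v⟫ = ‖u‖ * ⟪Ψ, x⟫ - ‖x‖ * S := by
    rw [hvdef, inner_sub_right, real_inner_smul_right, real_inner_smul_right, hiS]
  have hlow := (abs_le.mp (abs_real_inner_le_norm Ψ v)).1
  have hpos : 0 < ‖u‖ * ⟪Ψ, x⟫ := by
    rw [hiv] at hlow
    linarith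
  nlinarith

theorem stmt15 {n : ℕ} [NeZero n]
    (G : Matrix (Fin n) (Fin n) ℝ) (hGsym : G.IsSymm)
    (hGnn : ∀ i j, 0 ≤ G i j) (hGdiag : ∀ i, G i i = 0)
    (w : Fin n → Fin n → ℝ) (lam : Fin n → ℝ)
    (horth : ∀ i j, w i ⬝ᵥ w j = if i = j then (1 : ℝ) else 0)
    (heig : ∀ i, G *ᵥ w i = lam i • w i)
    (hgap : ∀ i, i ≠ 0 → lam i < lam 0)
    (hlam0 : 0 < lam 0)
    (hw0 : ∀ k, 0 < w 0 k) :
    (psiVec w lam ⬝ᵥ onesVec n = 0) ∧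
    ((∃ i : Fin n, i ≠ 0 ∧ w i ⬝ᵥ onesVec n ≠ 0) →
      demean (w 0) ≠ 0 ∧ 0 < psiVec w lam ⬝ᵥ demean (w 0)) ∧
    ((∃ i : Fin n, i ≠ 0 ∧ w i ⬝ᵥ onesVec n ≠ 0) →
      ∃ ε > (0 : ℝ), ∀ a : Fin n → ℝ, demean a ≠ 0 →
        (((1 - ε) * (eNorm (demean a) * eNorm (demean (w 0))) <
            demean a ⬝ᵥ demean (w 0) → 0 < psiVec w lam ⬝ᵥ a) ∧
          (demean a ⬝ᵥ demean (w 0) <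
            (-1 + ε) * (eNorm (demean a) * eNorm (demean (w 0))) →
            psiVec w lam ⬝ᵥ a < 0))) := by
  classical
  set s : Finset (Fin n) := Finset.univ.erase (0 : Fin n) with hs
  set S : ℝ := ∑ i ∈ s, (w i ⬝ᵥ onesVec n) ^ 2 / (1 - lam i / lam 0) with hSdef
  set c : Fin n → ℝ :=
    fun i => (w i ⬝ᵥ onesVec n) * (w 0 ⬝ᵥ onesVec n) / (1 - lam i / lam 0) with hcdef
  have psi_dot : ∀ z : Fin n → ℝ,
      psiVec w lam ⬝ᵥ z = S * (w 0 ⬝ᵥ z) - ∑ i ∈ s, c i * (w i ⬝ᵥ z) := by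
    intro z
    unfold psiVec
    rw [sub_dotProduct, smul_dotProduct, sum_smul_dot, smul_eq_mul]
  have hden : ∀ i, i ≠ (0 : Fin n) → 0 < 1 - lam i / lam 0 := by
    intro i hi
    have h1 : lam i / lam 0 < 1 := (div_lt_one hlam0).2 (hgap i hi)
    linarith
  have h1 : psiVec w lam ⬝ᵥ onesVec n = 0 := by
    rw [psi_dot]
    have hsum : ∑ i ∈ s, c i * (w i ⬝ᵥ onesVec n) = S * (w 0 ⬝ᵥ onesVec n) := by
      rw [hSdef, Finset.sum_mul]
      apply Finset.sum_congr rfl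
      intro i _
      rw [hcdef]
      ring
    rw [hsum]
    ring
  have hpsiw0 : psiVec w lam ⬝ᵥ w 0 = S := by
    rw [psi_dot]
    have hz : ∑ i ∈ s, c i * (w i ⬝ᵥ w 0) = 0 := by
      apply Finset.sum_eq_zero
      intro i hi
      rw [horth i 0, if_neg (Finset.ne_of_mem_erase hi)]
      ring
    rw [hz, horth 0 0, if_pos rfl]
    ring
  have hdm : ∀ z : Fin n → ℝ, psiVec w lam ⬝ᵥ demean z = psiVec w lam ⬝ᵥ z := by
    intro z
    unfold demean
    rw [dotProduct_sub, dotProduct_smul, smul_eq_mul, h1, mul_zero, sub_zero]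
  have hSpos : (∃ i : Fin n, i ≠ 0 ∧ w i ⬝ᵥ onesVec n ≠ 0) → 0 < S := by
    rintro ⟨i0, hi0, hz0⟩
    apply Finset.sum_pos'
    · intro i hi
      exact div_nonneg (sq_nonneg _) (le_of_lt (hden i (Finset.ne_of_mem_erase hi)))
    · refine ⟨i0, Finset.mem_erase.mpr ⟨hi0, Finset.mem_univ i0⟩, ?_⟩
      apply div_pos _ (hden i0 hi0)
      rw [sq]
      exact mul_self_pos.mpr hz0
  have hone : w 0 ⬝ᵥ onesVec n = ∑ x, w 0 x := by simp [dotProduct, onesVec]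
  have hdm0 : (∃ i : Fin n, i ≠ 0 ∧ w i ⬝ᵥ onesVec n ≠ 0) → demean (w 0) ≠ 0 := by
    rintro ⟨i0, hi0, hz0⟩ h
    have hm : ∀ k, w 0 k = (w 0 ⬝ᵥ onesVec n) / (n : ℝ) := by
      intro k
      have hk := congrFun h k
      simp [demean, onesVec] at hk
      linarith
    have hc0 : w i0 ⬝ᵥ w 0 = 0 := by rw [horth i0 0, if_neg hi0]
    have hc1 : w i0 ⬝ᵥ w 0 = ((w 0 ⬝ᵥ onesVec n) / (n : ℝ)) * (w i0 ⬝ᵥ onesVec n) := by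
      simp only [dotProduct, onesVec, mul_one, Finset.mul_sum]
      apply Finset.sum_congr rfl
      intro k _
      rw [hm k, hone]
      ring
    have hmpos : 0 < (w 0 ⬝ᵥ onesVec n) / (n : ℝ) := hm 0 ▸ hw0 0
    rw [hc0] at hc1
    exact hz0 (by
      rcases mul_eq_zero.mp hc1.symm with h' | h'
      · exact absurd h' (ne_of_gt hmpos)
      · exact h')
  refine ⟨h1, fun hnr => ⟨hdm0 hnr, ?_⟩, fun hnr => ?_⟩
  · rw [hdm, hpsiw0]
    exact hSpos hnr
  · have hS : 0 < S := hSpos hnr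
    have hu0 : toE (demean (w 0)) ≠ 0 := fun h => hdm0 hnr (by have := congrArg WithLp.ofLp h; simpa [toE] using this)
    have hN : 0 < ‖toE (demean (w 0))‖ := norm_pos_iff.mpr hu0
    have hinnerS : ⟪toE (psiVec w lam), toE (demean (w 0))⟫ = S := by
      rw [← dot_eq_inner, hdm, hpsiw0]
    set ε : ℝ := S ^ 2 / (4 * ‖toE (demean (w 0))‖ ^ 2 * ‖toE (psiVec w lam)‖ ^ 2) with hεdef
    have hCS : S ≤ ‖toE (psiVec w lam)‖ * ‖toE (demean (w 0))‖ :=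
      hinnerS ▸ real_inner_le_norm _ _
    have hP : 0 < ‖toE (psiVec w lam)‖ := by
      rcases lt_or_ge 0 ‖toE (psiVec w lam)‖ with h' | h'
      · exact h'
      · exfalso; nlinarith
    have hε : 0 < ε :=
      div_pos (pow_pos hS 2)
        (mul_pos (mul_pos (by norm_num) (pow_pos hN 2)) (pow_pos hP 2))
    have key : ∀ a : Fin n → ℝ, demean a ≠ 0 →
        (1 - ε) * (eNorm (demean a) * eNorm (demean (w 0))) < demean a ⬝ᵥ demean (w 0) →
        0 < psiVec w lam ⬝ᵥ a := by
      intro a ha h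
      have hx0 : toE (demean a) ≠ 0 := fun h' => ha (by have := congrArg WithLp.ofLp h'; simpa [toE] using this)
      have hX : 0 < ‖toE (demean a)‖ := norm_pos_iff.mpr hx0
      have h' : (1 - ε) * (‖toE (demean a)‖ * ‖toE (demean (w 0))‖) <
          ⟪toE (demean a), toE (demean (w 0))⟫ := by
        rw [← dot_eq_inner]
        rw [eNorm_eq, eNorm_eq] at h
        exact h
      have hres := inner_pos_of_close (toE (psiVec w lam)) (toE (demean (w 0)))
        (toE (demean a)) S hS hinnerS hN hX (hεdef ▸ h')
      rw [← hdm a, dot_eq_inner]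
      exact hres
    refine ⟨ε, hε, fun a ha => ⟨key a ha, ?_⟩⟩
    intro h
    have ha' : demean (-a) ≠ 0 := by
      rw [demean_neg]
      exact neg_ne_zero.mpr ha
    have hcond : (1 - ε) * (eNorm (demean (-a)) * eNorm (demean (w 0))) <
        demean (-a) ⬝ᵥ demean (w 0) := by
      rw [demean_neg, neg_dotProduct, eNorm_neg]
      linarith
    have := key (-a) ha' hcond
    rw [dotProduct_neg] at this
    linarith
end
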